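/- arXiv:1612.04169 — 3 statements merged into one kernel-verified Lean document; each statement's English description precedes it below -/
import Mathlib

section
/- Let A be a finite α-separated set in the hyperbolic plane with |A| ≥ 1, and let K be the convex hull of the α-neighborhood A_α. Assume Vol(K) ≤ C₀ · Vol(A_α) for a constant C₀ (Borbély's theorem). Then there exist constants c > 0 and c' > 0, depending only on α and C₀, such that at least c·|A| points of A are at distance at most c' from the boundary ∂K of the convex hull. -/
open UpperHalfPlane MeasureTheory

noncomputable instance : MeasurableSpace UpperHalfPlane := borel _
instance : BorelSpace UpperHalfPlane := ⟨rfl⟩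

/-- Hyperbolic area: the 2-dimensional Hausdorff measure on the hyperbolic plane. -/
noncomputable def hypVol : Measure UpperHalfPlane := Measure.hausdorffMeasure 2

/-- A geodesic segment from `x` to `y`, parametrized by arclength. -/
def IsGeodesicSegment {X : Type*} [MetricSpace X] (f : ℝ → X) (x y : X) : Prop :=
  f 0 = x ∧ f (dist x y) = y ∧
    ∀ s ∈ Set.Icc (0 : ℝ) (dist x y), ∀ t ∈ Set.Icc (0 : ℝ) (dist x y),
      dist (f s) (f t) = |s - t|

/-- A set is (geodesically) convex if it contains every geodesic between its points. -/
def GeodesicallyConvex {X : Type*} [MetricSpace X] (A : Set X) : Prop :=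
  ∀ x ∈ A, ∀ y ∈ A, ∀ f : ℝ → X, IsGeodesicSegment f x y →
    ∀ t ∈ Set.Icc (0 : ℝ) (dist x y), f t ∈ A

/-- The (geodesic) convex hull: intersection of all convex sets containing `A`. -/
def gConvexHull {X : Type*} [MetricSpace X] (A : Set X) : Set X :=
  ⋂₀ {K : Set X | GeodesicallyConvex K ∧ A ⊆ K}

section HypAuxSection

open Metric Set Complex
open scoped NNReal ENNReal

namespace HypAux

local notation "ℍ'" => UpperHalfPlane

/-- density of the hyperbolic area measure wrt Lebesgue -/
noncomputable def dens (w : ℂ) : ENNReal := ENNReal.ofReal (w.im⁻¹ ^ 2)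

noncomputable def nuC : Measure ℂ := volume.withDensity dens

lemma dens_meas : Measurable dens :=
  (measurable_im.inv.pow_const 2).ennreal_ofReal

lemma sinh_nonneg {r : ℝ} (hr : 0 ≤ r) : 0 ≤ Real.sinh r := by
  rw [← Real.sinh_zero]
  exact Real.sinh_le_sinh.mpr hr

lemma me_coe : MeasurableEmbedding ((↑) : ℍ' → ℂ) :=
  UpperHalfPlane.isOpenEmbedding_coe.measurableEmbedding

noncomputable def nu : Measure ℍ' := Measure.comap ((↑) : ℍ' → ℂ) nuC

lemma nu_apply (s : Set ℍ') : nu s = nuC (((↑) : ℍ' → ℂ) '' s) :=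
  me_coe.comap_apply _ _

lemma im_bounds_of_mem_cball {z : ℍ'} {r : ℝ} {w : ℂ}
    (hw : w ∈ closedBall ((z.center r : ℂ)) (z.im * Real.sinh r)) :
    z.im * (Real.cosh r - Real.sinh r) ≤ w.im ∧
      w.im ≤ z.im * (Real.cosh r + Real.sinh r) := by
  rw [mem_closedBall, Complex.dist_eq] at hw
  have h1 : |w.im - z.im * Real.cosh r| ≤ z.im * Real.sinh r := by
    have h2 := Complex.abs_im_le_norm (w - (z.center r : ℂ))
    simp only [Complex.sub_im, UpperHalfPlane.coe_im, UpperHalfPlane.center_im] at h2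
    exact h2.trans hw
  rw [abs_le] at h1
  constructor <;> linarith [h1.1, h1.2]

lemma nuC_cball_le (z : ℍ') {r : ℝ} (hr : 0 ≤ r) :
    nuC (closedBall ((z.center r : ℂ)) (z.im * Real.sinh r))
      ≤ ENNReal.ofReal (Real.sinh r ^ 2 * Real.exp (2*r)) * volume (ball (0:ℂ) 1) := by
  have hR : 0 ≤ z.im * Real.sinh r := by positivity
  have hmeas : MeasurableSet (closedBall ((z.center r : ℂ)) (z.im * Real.sinh r)) :=
    measurableSet_closedBall
  rw [nuC, withDensity_apply _ hmeas]
  have hbound : ∀ w ∈ closedBall ((z.center r : ℂ)) (z.im * Real.sinh r),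
      dens w ≤ ENNReal.ofReal ((z.im⁻¹ * Real.exp r) ^ 2) := by
    intro w hw
    have h1 := (im_bounds_of_mem_cball hw).1
    have h2 : z.im * Real.exp (-r) ≤ w.im := by
      rw [← Real.cosh_sub_sinh r]; exact h1
    have h3 : 0 < z.im * Real.exp (-r) := by positivity
    have h4 : w.im⁻¹ ≤ (z.im * Real.exp (-r))⁻¹ := by
      exact inv_anti₀ h3 h2
    have h5 : (z.im * Real.exp (-r))⁻¹ = z.im⁻¹ * Real.exp r := by
      rw [mul_inv, Real.exp_neg, inv_inv]
    rw [dens]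
    apply ENNReal.ofReal_le_ofReal
    have h6 : 0 ≤ w.im⁻¹ := by
      have := h3.trans_le h2
      positivity
    rw [← h5]
    exact pow_le_pow_left₀ h6 h4 2
  calc ∫⁻ w in closedBall ((z.center r : ℂ)) (z.im * Real.sinh r), dens w ∂volume
      ≤ ∫⁻ _ in closedBall ((z.center r : ℂ)) (z.im * Real.sinh r),
          ENNReal.ofReal ((z.im⁻¹ * Real.exp r) ^ 2) ∂volume := by
        apply setLIntegral_mono measurable_const
        exact hbound
    _ = ENNReal.ofReal ((z.im⁻¹ * Real.exp r) ^ 2)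
          * volume (closedBall ((z.center r : ℂ)) (z.im * Real.sinh r)) := by
        rw [setLIntegral_const]
    _ ≤ ENNReal.ofReal (Real.sinh r ^ 2 * Real.exp (2*r)) * volume (ball (0:ℂ) 1) := by
        rw [Measure.addHaar_closedBall volume _ hR, Complex.finrank_real_complex]
        rw [← mul_assoc, ← ENNReal.ofReal_mul (by positivity)]
        have him := z.im_pos.ne'
        rw [show (z.im⁻¹ * Real.exp r) ^ 2 * (z.im * Real.sinh r) ^ 2
            = Real.sinh r ^ 2 * Real.exp (2*r) from by
          rw [show (2:ℝ)*r = r + r from by ring, Real.exp_add]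
          field_simp]

lemma nuC_ball_ge (z : ℍ') {r : ℝ} (hr : 0 ≤ r) :
    ENNReal.ofReal ((Real.sinh r / (Real.cosh r + Real.sinh r)) ^ 2) * volume (ball (0:ℂ) 1)
      ≤ nuC (ball ((z.center r : ℂ)) (z.im * Real.sinh r)) := by
  have hR : 0 ≤ z.im * Real.sinh r := by positivity
  have hmeas : MeasurableSet (ball ((z.center r : ℂ)) (z.im * Real.sinh r)) :=
    measurableSet_ball
  rw [nuC, withDensity_apply _ hmeas]
  have hbound : ∀ w ∈ ball ((z.center r : ℂ)) (z.im * Real.sinh r),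
      ENNReal.ofReal ((z.im * (Real.cosh r + Real.sinh r))⁻¹ ^ 2) ≤ dens w := by
    intro w hw
    have h2 := (im_bounds_of_mem_cball (ball_subset_closedBall hw)).2
    have h1 := (im_bounds_of_mem_cball (ball_subset_closedBall hw)).1
    have h3 : 0 < w.im := by
      have : 0 < z.im * (Real.cosh r - Real.sinh r) := by
        have := Real.sinh_lt_cosh r
        have := z.im_pos
        nlinarith
      linarith
    rw [dens]
    apply ENNReal.ofReal_le_ofReal
    have h5 : 0 < z.im * (Real.cosh r + Real.sinh r) := by
      have h6 : (0:ℝ) < Real.cosh r := Real.cosh_pos r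
      have h7 : 0 ≤ Real.sinh r := sinh_nonneg hr
      have := z.im_pos
      positivity
    have h4 : (z.im * (Real.cosh r + Real.sinh r))⁻¹ ≤ w.im⁻¹ :=
      inv_anti₀ h3 h2
    exact pow_le_pow_left₀ (by positivity) h4 2
  calc ENNReal.ofReal ((Real.sinh r / (Real.cosh r + Real.sinh r)) ^ 2) * volume (ball (0:ℂ) 1)
      = ENNReal.ofReal ((z.im * (Real.cosh r + Real.sinh r))⁻¹ ^ 2)
          * volume (ball ((z.center r : ℂ)) (z.im * Real.sinh r)) := by
        rw [Measure.addHaar_ball volume _ hR, Complex.finrank_real_complex]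
        rw [← mul_assoc, ← ENNReal.ofReal_mul (by positivity)]
        congr 2
        have him := z.im_pos.ne'
        have hc : 0 < Real.cosh r + Real.sinh r := by
          have h6 : (0:ℝ) < Real.cosh r := Real.cosh_pos r
          have h7 : 0 ≤ Real.sinh r := sinh_nonneg hr
          positivity
        field_simp
    _ ≤ ∫⁻ w in ball ((z.center r : ℂ)) (z.im * Real.sinh r), dens w ∂volume := by
        rw [← setLIntegral_const]
        exact setLIntegral_mono dens_meas hbound


lemma sinh_le_crude {r : ℝ} (h0 : 0 ≤ r) (h1 : r ≤ 1) : Real.sinh r ≤ r * Real.exp 2 := by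
  rw [Real.sinh_eq]
  have e1 : 1 - 2*r ≤ Real.exp (-(2*r)) := by linarith [Real.add_one_le_exp (-(2*r))]
  have e2 : Real.exp r * Real.exp r ≤ Real.exp 2 := by
    rw [← Real.exp_add]; exact Real.exp_le_exp.mpr (by linarith)
  have e5 : Real.exp r * Real.exp (-r) = 1 := by rw [← Real.exp_add]; simp
  have e7 : Real.exp (-(2*r)) * (Real.exp r * Real.exp r) = 1 := by
    rw [← Real.exp_add, ← Real.exp_add]; ring_nf; exact Real.exp_zero
  have e8 : Real.exp (-r) ≤ 1 := Real.exp_le_one_iff.mpr (by linarith)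
  have e9 : 1 ≤ Real.exp r := Real.one_le_exp h0
  nlinarith [Real.exp_pos r, Real.exp_pos (-r), Real.exp_pos (-(2*r))]

noncomputable def CH : ENNReal := ENNReal.ofReal (Real.exp 6) * volume (ball (0:ℂ) 1)

lemma CH_ne_zero : CH ≠ 0 := by
  have h1 : volume (ball (0:ℂ) 1) ≠ 0 := (measure_ball_pos volume 0 one_pos).ne'
  have h2 : ENNReal.ofReal (Real.exp 6) ≠ 0 := by
    simp [ENNReal.ofReal_pos, Real.exp_pos]
  exact mul_ne_zero h2 h1

lemma CH_ne_top : CH ≠ ⊤ :=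
  ENNReal.mul_ne_top ENNReal.ofReal_ne_top measure_ball_lt_top.ne

lemma nu_le_smul_hypVol : nu ≤ CH • hypVol := by
  have key : ∀ s : Set ℍ', EMetric.diam s ≤ 1 →
      nu s ≤ CH * EMetric.diam s ^ (2:ℝ) := by
    intro s hs
    rcases Set.eq_empty_or_nonempty s with rfl | ⟨x, hx⟩
    · simp
    have hne : EMetric.diam s ≠ ⊤ := (hs.trans_lt (by simp)).ne
    have hbd : Bornology.IsBounded s := by
      rw [Metric.isBounded_iff_ediam_ne_top]; exact hne
    set r := Metric.diam s with hrdef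
    have hr0 : 0 ≤ r := Metric.diam_nonneg
    have hr1 : r ≤ 1 := by
      have := ENNReal.toReal_mono (by simp) hs
      rw [hrdef, Metric.diam]; exact this
    have hsub : s ⊆ closedBall x r := fun y hy =>
      mem_closedBall.mpr (Metric.dist_le_diam_of_mem hbd hy hx)
    have step1 : nu s ≤ nuC (closedBall ((x.center r : ℂ)) (x.im * Real.sinh r)) := by
      rw [← UpperHalfPlane.image_coe_closedBall, ← nu_apply]
      exact measure_mono hsub
    have step2 : nuC (closedBall ((x.center r : ℂ)) (x.im * Real.sinh r))
        ≤ ENNReal.ofReal (r ^ 2 * Real.exp 6) * volume (ball (0:ℂ) 1) := by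
      refine (nuC_cball_le x hr0).trans ?_
      refine mul_le_mul_left (ENNReal.ofReal_le_ofReal ?_) _
      have h2 : Real.sinh r ≤ r * Real.exp 2 := sinh_le_crude hr0 hr1
      have h3 : Real.exp (2*r) ≤ Real.exp 2 := Real.exp_le_exp.mpr (by linarith)
      have h4 : Real.exp 2 * Real.exp 2 * Real.exp 2 = Real.exp 6 := by
        rw [← Real.exp_add, ← Real.exp_add]; norm_num
      have h5 : 0 ≤ Real.sinh r := by
        rw [← Real.sinh_zero]; exact Real.sinh_le_sinh.mpr hr0
      have h6 : Real.sinh r ^ 2 ≤ (r * Real.exp 2) ^ 2 := by nlinarith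
      calc Real.sinh r ^ 2 * Real.exp (2*r) ≤ (r * Real.exp 2)^2 * Real.exp 2 := by
            apply mul_le_mul h6 h3 (Real.exp_pos _).le (by positivity)
        _ = r ^ 2 * Real.exp 6 := by rw [← h4]; ring
    have hdiam : ENNReal.ofReal (r^2) = EMetric.diam s ^ (2:ℝ) := by
      have : EMetric.diam s = ENNReal.ofReal r := by
        rw [hrdef, Metric.diam]; exact (ENNReal.ofReal_toReal hne).symm
      rw [this, ENNReal.ofReal_rpow_of_nonneg hr0 (by norm_num : (0:ℝ) ≤ 2)]
      congr 1
      rw [show ((2:ℝ)) = ((2:ℕ):ℝ) from by norm_num, Real.rpow_natCast]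
    calc nu s ≤ ENNReal.ofReal (r ^ 2 * Real.exp 6) * volume (ball (0:ℂ) 1) :=
          step1.trans step2
      _ = ENNReal.ofReal (r^2) * CH := by
          rw [CH, ENNReal.ofReal_mul (by positivity), mul_assoc]
      _ = CH * EMetric.diam s ^ (2:ℝ) := by rw [hdiam, mul_comm]
  -- deduce measure inequality
  have h2 : CH⁻¹ • nu ≤ Measure.hausdorffMeasure (2:ℝ) := by
    refine Measure.le_hausdorffMeasure 2 _ 1 one_pos fun s hs => ?_
    have := key s hs
    rw [Measure.smul_apply, smul_eq_mul]
    rw [← ENNReal.inv_mul_le_iff CH_ne_zero CH_ne_top] at this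
    exact this
  refine Measure.le_iff.mpr fun s hs => ?_
  have h3 := Measure.le_iff.mp h2 s hs
  rw [Measure.smul_apply, smul_eq_mul] at h3
  rw [Measure.smul_apply, smul_eq_mul]
  calc nu s = CH * (CH⁻¹ * nu s) := by
        rw [← mul_assoc, ENNReal.mul_inv_cancel CH_ne_zero CH_ne_top, one_mul]
    _ ≤ CH * hypVol s := by
        exact mul_le_mul_right h3 _


/-- vertical squeeze map -/
noncomputable def Tl (m : ℝ) : ℂ →ₗ[ℝ] ℂ where
  toFun w := ⟨w.re, m * w.im⟩
  map_add' a b := by apply Complex.ext <;> simp <;> ring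
  map_smul' r a := by
    apply Complex.ext <;> simp [Complex.real_smul] <;> ring

lemma Tl_re (m : ℝ) (w : ℂ) : (Tl m w).re = w.re := rfl
lemma Tl_im (m : ℝ) (w : ℂ) : (Tl m w).im = m * w.im := rfl

lemma Tl_inj {m : ℝ} (hm : m ≠ 0) : Function.Injective (Tl m) := by
  intro a b hab
  have h1 : (Tl m a).re = (Tl m b).re := by rw [hab]
  have h2 : (Tl m a).im = (Tl m b).im := by rw [hab]
  rw [Tl_re, Tl_re] at h1
  rw [Tl_im, Tl_im] at h2
  exact Complex.ext h1 (by
    field_simp at h2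
    exact h2)

lemma Tl_det (m : ℝ) : LinearMap.det (Tl m) = m := by
  rw [← LinearMap.det_toMatrix Complex.basisOneI, Matrix.det_fin_two]
  simp [LinearMap.toMatrix_apply, Tl, Complex.basisOneI]

lemma Tl_cont (m : ℝ) : Continuous (Tl m) := (Tl m).continuous_of_finiteDimensional

lemma Tl_image_meas {m : ℝ} (hm : 0 < m) {E : Set ℂ} (hE : MeasurableSet E) :
    MeasurableSet (Tl m '' E) := by
  have heq : Tl m '' E = Tl m⁻¹ ⁻¹' E := by
    ext w
    constructor
    · rintro ⟨x, hx, rfl⟩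
      have : Tl m⁻¹ (Tl m x) = x := by
        apply Complex.ext
        · rfl
        · rw [Tl_im, Tl_im]; field_simp
      rwa [Set.mem_preimage, this]
    · intro hw
      refine ⟨Tl m⁻¹ w, hw, ?_⟩
      apply Complex.ext
      · rfl
      · rw [Tl_im, Tl_im]; field_simp
  rw [heq]
  exact (Tl_cont m⁻¹).measurable hE

lemma nuC_squeeze {m : ℝ} (hm : 0 < m) (hm1 : m ≤ 1) {E : Set ℂ} (hE : MeasurableSet E) :
    nuC (Tl m '' E) = ENNReal.ofReal m⁻¹ * nuC E := by
  rw [nuC, withDensity_apply _ (Tl_image_meas hm hE), withDensity_apply _ hE]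
  have hderiv : ∀ x ∈ E, HasFDerivWithinAt (Tl m)
      ((Tl m).toContinuousLinearMap) E x := fun x _ =>
    ((Tl m).toContinuousLinearMap.hasFDerivAt).hasFDerivWithinAt
  rw [lintegral_image_eq_lintegral_abs_det_fderiv_mul volume hE hderiv
    ((Tl_inj hm.ne').injOn) dens]
  have hdet : |((Tl m).toContinuousLinearMap : ℂ →L[ℝ] ℂ).det| = m := by
    rw [ContinuousLinearMap.det]
    rw [LinearMap.coe_toContinuousLinearMap]
    rw [Tl_det, abs_of_pos hm]
  have hpt : ∀ x : ℂ, ENNReal.ofReal |((Tl m).toContinuousLinearMap : ℂ →L[ℝ] ℂ).det|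
      * dens (Tl m x) = ENNReal.ofReal m⁻¹ * dens x := by
    intro x
    rw [hdet, dens, dens, Tl_im]
    rw [← ENNReal.ofReal_mul hm.le, ← ENNReal.ofReal_mul (by positivity)]
    congr 1
    have hmne : m ≠ 0 := hm.ne'
    rw [mul_inv, mul_pow, sq m⁻¹, ← mul_assoc, ← mul_assoc, mul_inv_cancel₀ hmne, one_mul]
  simp_rw [hpt]
  rw [lintegral_const_mul _ dens_meas]


lemma dist_sq_coords (z w : ℂ) : dist z w ^ 2 = (z.re - w.re)^2 + (z.im - w.im)^2 := by
  rw [Complex.dist_eq, Complex.sq_norm, Complex.normSq_apply, Complex.sub_re, Complex.sub_im]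
  ring

lemma coe_dist_sq (x y : ℍ') :
    dist (x:ℂ) (y:ℂ) ^ 2 = 2 * x.im * y.im * (Real.cosh (dist x y) - 1) := by
  have h := UpperHalfPlane.cosh_dist x y
  have h2 : (0:ℝ) < 2 * x.im * y.im := by positivity
  field_simp at h
  nlinarith [h]

set_option maxHeartbeats 1000000 in
/-- The key "betweenness" identity: if `u` lies metrically between `x` and `y`
(`d(x,u)=s`, `d(u,y)=t`, `d(x,y)=s+t`), then its imaginary part satisfies the
explicit interpolation formula coming from tangency of hyperbolic circles. -/
lemma between_im {x y u : ℍ'} {s t : ℝ} (hs : 0 < s) (ht : 0 < t)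
    (h1 : dist x u = s) (h2 : dist u y = t) (h3 : dist x y = s + t) :
    (x.im * Real.sinh s + y.im * Real.sinh t) * u.im
      = (y.im * Real.sinh t) * (x.im * Real.cosh s)
        + (x.im * Real.sinh s) * (y.im * Real.cosh t) := by
  set r1 := x.im * Real.sinh s with hr1
  set r2 := y.im * Real.sinh t with hr2
  have hr1p : 0 < r1 := by
    have := Real.sinh_pos_iff.mpr hs
    have := x.im_pos
    positivity
  have hr2p : 0 < r2 := by
    have := Real.sinh_pos_iff.mpr ht
    have := y.im_pos
    positivity
  have e1 : dist ((u:ℂ)) ((x.center s : ℂ)) = r1 :=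
    UpperHalfPlane.dist_eq_iff_dist_coe_center_eq.mp (by rw [dist_comm]; exact h1)
  have e2 : dist ((u:ℂ)) ((y.center t : ℂ)) = r2 :=
    UpperHalfPlane.dist_eq_iff_dist_coe_center_eq.mp h2
  -- the two circles are tangent:
  have e3sq : dist ((x.center s : ℂ)) ((y.center t : ℂ)) ^ 2 = (r1 + r2)^2 := by
    have hxy := coe_dist_sq x y
    rw [h3, Real.cosh_add] at hxy
    rw [dist_sq_coords] at hxy ⊢
    simp only [UpperHalfPlane.coe_re, UpperHalfPlane.coe_im, UpperHalfPlane.center_re,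
      UpperHalfPlane.center_im] at hxy ⊢
    rw [hr1, hr2]
    linear_combination hxy + x.im^2 * Real.cosh_sq s + y.im^2 * Real.cosh_sq t
  have E1 : ((u:ℂ).re - x.re)^2 + (u.im - x.im * Real.cosh s)^2 = r1^2 := by
    have := e1
    rw [← this, dist_sq_coords]
    simp only [UpperHalfPlane.coe_re, UpperHalfPlane.coe_im, UpperHalfPlane.center_re,
      UpperHalfPlane.center_im]
  have E2 : ((u:ℂ).re - y.re)^2 + (u.im - y.im * Real.cosh t)^2 = r2^2 := by
    rw [← e2, dist_sq_coords]
    simp only [UpperHalfPlane.coe_re, UpperHalfPlane.coe_im, UpperHalfPlane.center_re,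
      UpperHalfPlane.center_im]
  have E3 : (x.re - y.re)^2 + (x.im * Real.cosh s - y.im * Real.cosh t)^2 = (r1 + r2)^2 := by
    rw [← e3sq, dist_sq_coords]
    simp only [UpperHalfPlane.coe_re, UpperHalfPlane.coe_im, UpperHalfPlane.center_re,
      UpperHalfPlane.center_im]
  have hzero : (r2*((u:ℂ).re - x.re) + r1*((u:ℂ).re - y.re))^2
      + (r2*(u.im - x.im * Real.cosh s) + r1*(u.im - y.im * Real.cosh t))^2 = 0 := by
    linear_combination r2^2 * E1 + r1^2 * E2 + r1*r2*E1 + r1*r2*E2 - r1*r2*E3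
  have h4 : r2*(u.im - x.im * Real.cosh s) + r1*(u.im - y.im * Real.cosh t) = 0 := by
    have h5 := sq_nonneg (r2*((u:ℂ).re - x.re) + r1*((u:ℂ).re - y.re))
    have h6 := sq_nonneg (r2*(u.im - x.im * Real.cosh s) + r1*(u.im - y.im * Real.cosh t))
    have h7 : (r2*(u.im - x.im * Real.cosh s) + r1*(u.im - y.im * Real.cosh t))^2 = 0 := by
      linarith
    exact pow_eq_zero_iff two_ne_zero |>.mp h7
  linarith [h4]

lemma im_between {x y u : ℍ'} {s t : ℝ} (hs : 0 < s) (ht : 0 < t)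
    (h1 : dist x u = s) (h2 : dist u y = t) (h3 : dist x y = s + t) :
    min x.im y.im ≤ u.im := by
  have key := between_im hs ht h1 h2 h3
  have hr1p : 0 < x.im * Real.sinh s := by
    have := Real.sinh_pos_iff.mpr hs; have := x.im_pos; positivity
  have hr2p : 0 < y.im * Real.sinh t := by
    have := Real.sinh_pos_iff.mpr ht; have := y.im_pos; positivity
  have hcs : 1 ≤ Real.cosh s := Real.one_le_cosh s
  have hct : 1 ≤ Real.cosh t := Real.one_le_cosh t
  have hma : min x.im y.im ≤ x.im := min_le_left _ _
  have hmb : min x.im y.im ≤ y.im := min_le_right _ _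
  nlinarith [mul_le_mul_of_nonneg_left hma hr2p.le, mul_le_mul_of_nonneg_left hmb hr1p.le,
    mul_le_mul_of_nonneg_left hcs (mul_pos hr2p x.im_pos).le,
    mul_le_mul_of_nonneg_left hct (mul_pos hr1p y.im_pos).le]

/-- Horoballs centered at `∞` are geodesically convex. -/
lemma horoball_gconvex (m : ℝ) : GeodesicallyConvex {z : ℍ' | m ≤ z.im} := by
  intro x hx y hy f hf t ht
  obtain ⟨hf0, hfd, hiso⟩ := hf
  have hd0 : (0:ℝ) ≤ dist x y := dist_nonneg
  obtain ⟨ht0, htd⟩ := ht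
  have h0mem : (0:ℝ) ∈ Set.Icc (0:ℝ) (dist x y) := ⟨le_refl _, hd0⟩
  have hdmem : dist x y ∈ Set.Icc (0:ℝ) (dist x y) := ⟨hd0, le_refl _⟩
  have h1 : dist x (f t) = t := by
    have h := hiso 0 h0mem t ⟨ht0, htd⟩
    rw [hf0] at h
    rw [h, zero_sub, abs_neg, _root_.abs_of_nonneg ht0]
  have h2 : dist (f t) y = dist x y - t := by
    have h := hiso t ⟨ht0, htd⟩ (dist x y) hdmem
    rw [hfd] at h
    rw [h, abs_of_nonpos (by linarith), neg_sub]
  rcases eq_or_lt_of_le ht0 with h | h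
  · rw [← h, hf0]; exact hx
  rcases eq_or_lt_of_le htd with h' | h'
  · rw [h', hfd]; exact hy
  have key : min x.im y.im ≤ (f t).im :=
    im_between h (by linarith) h1 h2 (by ring)
  have : m ≤ min x.im y.im := le_min hx hy
  exact this.trans key

/-- Transport of geodesic convexity along an isometric equivalence. -/
lemma gconvex_image (e : ℍ' ≃ᵢ ℍ') {S : Set ℍ'} (hS : GeodesicallyConvex S) :
    GeodesicallyConvex (e '' S) := by
  rintro x' ⟨x, hx, rfl⟩ y' ⟨y, hy, rfl⟩ f hf t ht
  obtain ⟨hf0, hfd, hiso⟩ := hf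
  have hdist : dist (e x) (e y) = dist x y := e.isometry.dist_eq x y
  have hgeo : IsGeodesicSegment (fun τ => e.symm (f τ)) x y := by
    refine ⟨?_, ?_, ?_⟩
    · show e.symm (f 0) = x
      rw [hf0]; exact e.symm_apply_apply x
    · show e.symm (f (dist x y)) = y
      rw [← hdist, hfd]; exact e.symm_apply_apply y
    · intro s hs τ hτ
      show dist (e.symm (f s)) (e.symm (f τ)) = |s - τ|
      rw [← hdist] at hs hτ
      rw [e.symm.isometry.dist_eq]
      exact hiso s hs τ hτ
  have hmem : (fun τ => e.symm (f τ)) t ∈ S := by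
    apply hS x hx y hy _ hgeo
    rwa [hdist] at ht
  have : f t = e (e.symm (f t)) := (e.apply_symm_apply (f t)).symm
  rw [this]
  exact Set.mem_image_of_mem e hmem

lemma gconvex_inter {S T : Set ℍ'} (hS : GeodesicallyConvex S) (hT : GeodesicallyConvex T) :
    GeodesicallyConvex (S ∩ T) := by
  intro x hx y hy f hf t ht
  exact ⟨hS x hx.1 y hy.1 f hf t ht, hT x hx.2 y hy.2 f hf t ht⟩

/-- the hyperbolic inversion `z ↦ -1/z` -/
noncomputable def inv0 (z : ℍ') : ℍ' := UpperHalfPlane.mk ((-(z:ℂ))⁻¹) z.im_inv_neg_coe_pos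

lemma inv0_coe (z : ℍ') : (inv0 z : ℂ) = (-(z:ℂ))⁻¹ := rfl

lemma inv0_im (z : ℍ') : (inv0 z).im = z.im / Complex.normSq (z:ℂ) := by
  have : (inv0 z).im = ((-(z:ℂ))⁻¹).im := rfl
  rw [this, Complex.inv_im, Complex.normSq_neg, Complex.neg_im, neg_neg,
    UpperHalfPlane.coe_im]

lemma inv0_invol (z : ℍ') : inv0 (inv0 z) = z := by
  apply UpperHalfPlane.ext
  show (-((-(z:ℂ))⁻¹))⁻¹ = (z:ℂ)
  rw [inv_neg, inv_inv, neg_neg]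

lemma inv0_dist (z w : ℍ') : dist (inv0 z) (inv0 w) = dist z w := by
  have hz : (z:ℂ) ≠ 0 := z.ne_zero
  have hw : (w:ℂ) ≠ 0 := w.ne_zero
  have hza : 0 < ‖(z:ℂ)‖ := norm_pos_iff.mpr hz
  have hwa : 0 < ‖(w:ℂ)‖ := norm_pos_iff.mpr hw
  rw [UpperHalfPlane.dist_eq, UpperHalfPlane.dist_eq]
  congr 2
  have habs : dist ((inv0 z : ℂ)) ((inv0 w : ℂ))
      = dist (z:ℂ) (w:ℂ) / (‖(z:ℂ)‖ * ‖(w:ℂ)‖) := by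
    rw [Complex.dist_eq, Complex.dist_eq, inv0_coe, inv0_coe]
    rw [show (-(z:ℂ))⁻¹ - (-(w:ℂ))⁻¹ = ((z:ℂ) - (w:ℂ)) / ((z:ℂ)*(w:ℂ)) from by
      rw [inv_neg, inv_neg, show -(z:ℂ)⁻¹ - -(w:ℂ)⁻¹ = (w:ℂ)⁻¹ - (z:ℂ)⁻¹ from by ring,
        ← one_div, ← one_div, div_sub_div 1 1 hw hz, one_mul, mul_one,
        mul_comm ((w:ℂ)) ((z:ℂ))]]
    rw [norm_div, norm_mul]
  have him : Real.sqrt ((inv0 z).im * (inv0 w).im)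
      = Real.sqrt (z.im * w.im) / (‖(z:ℂ)‖ * ‖(w:ℂ)‖) := by
    rw [inv0_im, inv0_im]
    rw [show z.im / Complex.normSq (z:ℂ) * (w.im / Complex.normSq (w:ℂ))
        = (z.im * w.im) / ((‖(z:ℂ)‖ * ‖(w:ℂ)‖)^2) from by
      rw [Complex.normSq_eq_norm_sq, Complex.normSq_eq_norm_sq]; field_simp]
    rw [Real.sqrt_div (mul_nonneg z.im_pos.le w.im_pos.le)]
    rw [Real.sqrt_sq (by positivity)]
  rw [habs, him]
  have hS : 0 < Real.sqrt (z.im * w.im) := Real.sqrt_pos.mpr (by positivity)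
  field_simp

noncomputable def invIso : ℍ' ≃ᵢ ℍ' :=
  ⟨⟨inv0, inv0, inv0_invol, inv0_invol⟩, Isometry.of_dist_eq inv0_dist⟩

lemma invIso_apply (z : ℍ') : invIso z = inv0 z := rfl


noncomputable def lift (w : ℂ) : ℍ' :=
  if h : 0 < w.im then UpperHalfPlane.mk w h else UpperHalfPlane.I

lemma lift_coe (z : ℍ') : lift (z : ℂ) = z := by
  rw [lift]
  exact (dif_pos z.2).trans (UpperHalfPlane.mk_coe z _)

lemma lift_coe' {w : ℂ} (hw : 0 < w.im) : (lift w : ℂ) = w := by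
  rw [lift]
  exact (congrArg _ (dif_pos hw)).trans (UpperHalfPlane.coe_mk w hw)

lemma lift_lipschitz {y₀ : ℝ} (hy : 0 < y₀) {S : Set ℂ} (hS : ∀ w ∈ S, y₀ ≤ w.im) :
    LipschitzOnWith (Real.toNNReal y₀⁻¹) lift S := by
  apply LipschitzOnWith.of_dist_le_mul
  intro w hw v hv
  have hwim := hy.trans_le (hS w hw)
  have hvim := hy.trans_le (hS v hv)
  have h1 : dist (lift w) (lift v) ≤ dist ((lift w : ℂ)) ((lift v : ℂ))
      / Real.sqrt ((lift w).im * (lift v).im) :=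
    UpperHalfPlane.dist_le_dist_coe_div_sqrt _ _
  rw [lift_coe' hwim, lift_coe' hvim] at h1
  have h2 : y₀ ≤ Real.sqrt ((lift w).im * (lift v).im) := by
    have : (y₀ : ℝ) = Real.sqrt (y₀ * y₀) := (Real.sqrt_mul_self hy.le).symm
    rw [this]
    apply Real.sqrt_le_sqrt
    have e1 : (lift w).im = w.im := by
      rw [← UpperHalfPlane.coe_im, lift_coe' hwim]
    have e2 : (lift v).im = v.im := by
      rw [← UpperHalfPlane.coe_im, lift_coe' hvim]
    rw [e1, e2]
    exact mul_le_mul (hS w hw) (hS v hv) hy.le hwim.le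
  have h3 : Real.sqrt ((lift w).im * (lift v).im) > 0 := hy.trans_le h2
  calc dist (lift w) (lift v)
      ≤ dist w v / Real.sqrt ((lift w).im * (lift v).im) := h1
    _ ≤ dist w v / y₀ := div_le_div_of_nonneg_left dist_nonneg hy h2
    _ = y₀⁻¹ * dist w v := div_eq_inv_mul _ _
    _ = (Real.toNNReal y₀⁻¹ : ℝ) * dist w v := by
        rw [Real.coe_toNNReal _ (by positivity)]

/-- the ℝ² → ℂ assembling map is 2-Lipschitz (sup metric) -/
def uMap (v : Fin 2 → ℝ) : ℂ := ⟨v 0, v 1⟩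

lemma uMap_lipschitz : LipschitzWith 2 uMap := by
  apply LipschitzWith.of_dist_le_mul
  intro v v'
  have h1 : dist (uMap v) (uMap v') ≤ |v 0 - v' 0| + |v 1 - v' 1| := by
    rw [Complex.dist_eq]
    exact (Complex.norm_le_abs_re_add_abs_im _)
  have h2 : |v 0 - v' 0| ≤ dist v v' := by
    rw [← Real.dist_eq]; exact dist_le_pi_dist v v' 0
  have h3 : |v 1 - v' 1| ≤ dist v v' := by
    rw [← Real.dist_eq]; exact dist_le_pi_dist v v' 1
  push_cast
  linarith

lemma hausdorff_pi : (Measure.hausdorffMeasure (2:ℝ) : Measure (Fin 2 → ℝ)) = volume := by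
  have := MeasureTheory.hausdorffMeasure_pi_real (ι := Fin 2)
  simpa using this

lemma ofReal_rpow_two (c : ℝ) (hc : 0 ≤ c) :
    (ENNReal.ofReal c) ^ (2:ℝ) = ENNReal.ofReal (c^2) := by
  rw [ENNReal.ofReal_rpow_of_nonneg hc (by norm_num : (0:ℝ) ≤ 2)]
  congr 1
  rw [show ((2:ℝ)) = ((2:ℕ):ℝ) from by norm_num, Real.rpow_natCast]

lemma coe_toNNReal_rpow_two (c : ℝ) (hc : 0 ≤ c) :
    ((Real.toNNReal c : ENNReal)) ^ (2:ℝ) = ENNReal.ofReal (c^2) := by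
  rw [show ((Real.toNNReal c : ENNReal)) = ENNReal.ofReal c from rfl, ofReal_rpow_two c hc]

/-- Main Hausdorff-measure bound via a Lipschitz chart. -/
lemma hypVol_region_le {y₀ R : ℝ} (hy : 0 < y₀) (hR : 0 ≤ R) (p : Fin 2 → ℝ)
    (S : Set ℂ) (hS1 : ∀ w ∈ S, y₀ ≤ w.im)
    (hS2 : ∀ w ∈ S, |w.re - p 0| ≤ R ∧ |w.im - p 1| ≤ R) :
    hypVol (lift '' S) ≤ ENNReal.ofReal (y₀⁻¹ ^ 2) * (4 * ENNReal.ofReal ((2*R)^2)) := by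
  have step1 : hypVol (lift '' S)
      ≤ ((Real.toNNReal y₀⁻¹ : ENNReal)) ^ (2:ℝ) * Measure.hausdorffMeasure (2:ℝ) S :=
    (lift_lipschitz hy hS1).hausdorffMeasure_image_le (by norm_num)
  have hsub : S ⊆ uMap '' (closedBall p R) := by
    intro w hw
    refine ⟨![w.re, w.im], ?_, by simp [uMap]⟩
    rw [mem_closedBall, dist_pi_le_iff hR]
    intro i
    fin_cases i
    · simpa [Real.dist_eq] using (hS2 w hw).1
    · simpa [Real.dist_eq] using (hS2 w hw).2
  have step2 : Measure.hausdorffMeasure (2:ℝ) S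
      ≤ ((2:ℝ≥0) : ENNReal) ^ (2:ℝ) * Measure.hausdorffMeasure (2:ℝ) (closedBall p R) := by
    refine le_trans (measure_mono hsub) ?_
    exact uMap_lipschitz.hausdorffMeasure_image_le (by norm_num) _
  have step3 : (Measure.hausdorffMeasure (2:ℝ) : Measure (Fin 2 → ℝ)) (closedBall p R)
      = ENNReal.ofReal ((2*R)^2) := by
    rw [hausdorff_pi]
    rw [Real.volume_pi_closedBall p hR]
    norm_num
  calc hypVol (lift '' S)
      ≤ ((Real.toNNReal y₀⁻¹ : ENNReal)) ^ (2:ℝ)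
        * (((2:ℝ≥0) : ENNReal) ^ (2:ℝ) * Measure.hausdorffMeasure (2:ℝ) (closedBall p R)) := by
        exact step1.trans (mul_le_mul_right step2 _)
    _ = ENNReal.ofReal (y₀⁻¹ ^ 2) * (4 * ENNReal.ofReal ((2*R)^2)) := by
        have h4 : (((2:ℝ≥0) : ENNReal)) ^ (2:ℝ) = 4 := by
          rw [show (((2:ℝ≥0)) : ENNReal) = ENNReal.ofReal 2 from by norm_num,
            ofReal_rpow_two 2 (by norm_num)]
          norm_num
        rw [step3, coe_toNNReal_rpow_two _ (by positivity), h4]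


lemma subset_gConvexHull (A : Set ℍ') : A ⊆ gConvexHull A := by
  intro x hx
  intro S hS
  exact hS.2 hx

lemma gConvexHull_subset {A S : Set ℍ'} (h1 : GeodesicallyConvex S) (h2 : A ⊆ S) :
    gConvexHull A ⊆ S :=
  sInter_subset_of_mem ⟨h1, h2⟩

lemma cball_eq_lift_image (a : ℍ') (r : ℝ) :
    closedBall a r = lift '' (closedBall ((a.center r : ℂ)) (a.im * Real.sinh r)) := by
  rw [← UpperHalfPlane.image_coe_closedBall, Set.image_image]
  have : ∀ z : ℍ', lift ((z : ℂ)) = z := lift_coe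
  simp only [this, Set.image_id']

lemma hypVol_cball_le (a : ℍ') {r : ℝ} (hr : 0 ≤ r) :
    hypVol (closedBall a r) ≤ 16 * ENNReal.ofReal ((Real.exp r * Real.sinh r)^2) := by
  have hy : 0 < a.im * Real.exp (-r) := by positivity
  have hR : 0 ≤ a.im * Real.sinh r := by
    have : 0 ≤ Real.sinh r := by
      rw [← Real.sinh_zero]; exact Real.sinh_le_sinh.mpr hr
    positivity
  rw [cball_eq_lift_image a r]
  refine le_trans (hypVol_region_le hy hR ![a.re, a.im * Real.cosh r] _ ?_ ?_) ?_
  · intro w hw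
    have := (im_bounds_of_mem_cball hw).1
    rwa [Real.cosh_sub_sinh] at this
  · intro w hw
    rw [mem_closedBall, Complex.dist_eq] at hw
    constructor
    · have h := Complex.abs_re_le_norm (w - (a.center r : ℂ))
      simp only [Complex.sub_re, UpperHalfPlane.coe_re, UpperHalfPlane.center_re] at h
      simpa using (h.trans hw)
    · have h := Complex.abs_im_le_norm (w - (a.center r : ℂ))
      simp only [Complex.sub_im, UpperHalfPlane.coe_im, UpperHalfPlane.center_im] at h
      simpa using (h.trans hw)
  · have him : a.im ≠ 0 := a.im_pos.ne'
    rw [show ((a.im * Real.exp (-r))⁻¹ ^ 2 : ℝ)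
        = a.im⁻¹^2 * Real.exp r ^ 2 from by
      rw [mul_inv, Real.exp_neg, inv_inv]; ring]
    rw [show ((2 * (a.im * Real.sinh r))^2 : ℝ) = 4 * (a.im^2 * Real.sinh r^2) from by ring]
    rw [ENNReal.ofReal_mul (by positivity), ENNReal.ofReal_mul (by positivity),
      ENNReal.ofReal_mul (by positivity)]
    rw [show (ENNReal.ofReal (4:ℝ)) = 4 from by norm_num]
    calc ENNReal.ofReal (a.im⁻¹ ^ 2) * ENNReal.ofReal (Real.exp r ^ 2) *
          (4 * (4 * (ENNReal.ofReal (a.im ^ 2) * ENNReal.ofReal (Real.sinh r ^ 2))))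
        = 16 * (ENNReal.ofReal (a.im⁻¹ ^ 2) * ENNReal.ofReal (a.im ^ 2))
          * (ENNReal.ofReal (Real.exp r ^ 2) * ENNReal.ofReal (Real.sinh r ^ 2)) := by
          ring
      _ = 16 * ENNReal.ofReal ((Real.exp r * Real.sinh r)^2) := by
          rw [← ENNReal.ofReal_mul (by positivity), ← ENNReal.ofReal_mul (by positivity)]
          rw [show (a.im⁻¹^2 * a.im^2 : ℝ) = 1 from by field_simp]
          rw [ENNReal.ofReal_one, mul_one]
          congr 1
          ring
      _ ≤ 16 * ENNReal.ofReal ((Real.exp r * Real.sinh r)^2) := le_refl _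

lemma ball_preconnected (a : ℍ') (r : ℝ) : IsPreconnected (ball a r) := by
  have h : IsPreconnected (((↑) : ℍ' → ℂ) '' ball a r) := by
    rw [UpperHalfPlane.image_coe_ball]
    exact (convex_ball _ _).isPreconnected
  exact (UpperHalfPlane.isEmbedding_coe.toIsInducing.isPreconnected_image).mp h

lemma deep_ball_subset {K : Set ℍ'} {a : ℍ'} {r : ℝ} (hr : 0 < r) (haK : a ∈ K)
    (hfr : ∀ p ∈ ball a r, p ∉ frontier K) : ball a r ⊆ K := by
  have hsub : ball a r ⊆ interior K ∪ interior Kᶜ := by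
    intro z hz
    by_cases hz1 : z ∈ closure K
    · by_cases hz2 : z ∈ interior K
      · exact Or.inl hz2
      · exact absurd (by rw [frontier]; exact ⟨hz1, hz2⟩) (hfr z hz)
    · right
      rw [interior_compl]
      exact hz1
  have hna : a ∈ interior K := by
    by_cases h : a ∈ interior K
    · exact h
    · exact absurd (by rw [frontier]; exact ⟨subset_closure haK, h⟩)
        (hfr a (mem_ball_self hr))
  have hne : (ball a r ∩ interior K).Nonempty := ⟨a, mem_ball_self hr, hna⟩
  have hdisj : Disjoint (interior K) (interior Kᶜ) := by
    rw [interior_compl]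
    rw [Set.disjoint_left]
    exact fun x hx hx' => hx' (interior_subset_closure hx)
  have := (ball_preconnected a r).subset_left_of_subset_union isOpen_interior
    isOpen_interior hdisj hsub hne
  exact this.trans interior_subset


end HypAux

end HypAuxSection

open HypAux Metric Set Complex
open scoped NNReal ENNReal

local notation "ℍ'" => UpperHalfPlane

set_option maxHeartbeats 2000000 in
/-- if `A` is a finite `α`-separated set in the hyperbolic plane, `K` the convex
hull of its `α`-neighborhood `A_α`, and `Vol(K) ≤ C₀ · Vol(A_α)` (Borbély), then a proportion
`c` of the points of `A` lie within distance `c'` of `∂K`, with `c, c'` depending only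
on `α, C₀`. -/
theorem stmt_7 (α C₀ : ℝ) (hα : 0 < α) (hC₀ : 0 < C₀) :
    ∃ c > (0 : ℝ), ∃ c' > (0 : ℝ),
      ∀ A : Finset UpperHalfPlane, 1 ≤ A.card →
        (∀ a ∈ A, ∀ a' ∈ A, a ≠ a' → α ≤ dist a a') →
        ∀ (Aα K : Set UpperHalfPlane),
          Aα = {x : UpperHalfPlane | ∃ a ∈ A, dist x a ≤ α} →
          K = gConvexHull Aα →
          (hypVol K).toReal ≤ C₀ * (hypVol Aα).toReal →
          c * A.card ≤
            ((A.filter (fun a => Metric.infDist a (frontier K) ≤ c')).card : ℝ) := by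
  have hsinh : 0 < Real.sinh (α/2) := Real.sinh_pos_iff.mpr (by linarith)
  have hcosh : 0 < Real.cosh (α/2) := Real.cosh_pos _
  set vb : ℝ≥0∞ := ENNReal.ofReal
      ((Real.sinh (α/2) / (Real.cosh (α/2) + Real.sinh (α/2)))^2) * volume (ball (0:ℂ) 1)
    with hvbdef
  have hvb0 : vb ≠ 0 := by
    refine mul_ne_zero ?_ (measure_ball_pos _ _ one_pos).ne'
    rw [Ne, ENNReal.ofReal_eq_zero, not_le]
    positivity
  have hvbtop : vb ≠ ∞ := ENNReal.mul_ne_top ENNReal.ofReal_ne_top measure_ball_lt_top.ne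
  set hb : ℝ≥0∞ := 16 * ENNReal.ofReal ((Real.exp α * Real.sinh α)^2) with hhbdef
  have hhbtop : hb ≠ ∞ := ENNReal.mul_ne_top (by norm_num) ENNReal.ofReal_ne_top
  set M₀ : ℝ≥0∞ := CH * ENNReal.ofReal C₀ * hb with hM₀def
  have hM₀top : M₀ ≠ ∞ :=
    ENNReal.mul_ne_top (ENNReal.mul_ne_top CH_ne_top ENNReal.ofReal_ne_top) hhbtop
  set T : ℝ := (2 * M₀ / vb).toReal with hTdef
  set t₀ : ℝ := max 1 (Real.log T + 1) with ht₀def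
  have ht₀1 : (1:ℝ) ≤ t₀ := le_max_left _ _
  have ht₀pos : (0:ℝ) < t₀ := by linarith
  have hkey : 2 * M₀ ≤ ENNReal.ofReal (Real.exp t₀) * vb := by
    have hfin : 2 * M₀ / vb ≠ ∞ := by
      exact (ENNReal.div_lt_top (ENNReal.mul_ne_top (by norm_num) hM₀top) hvb0).ne
    have h1 : 2 * M₀ / vb ≤ ENNReal.ofReal (Real.exp t₀) := by
      rw [ENNReal.le_ofReal_iff_toReal_le hfin (Real.exp_pos _).le]
      rcases le_or_gt T 0 with h | h
      · exact h.trans (Real.exp_pos _).le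
      · have h2 : Real.log T + 1 ≤ t₀ := le_max_right _ _
        calc T = Real.exp (Real.log T) := (Real.exp_log h).symm
          _ ≤ Real.exp t₀ := Real.exp_le_exp.mpr (by linarith)
    calc 2 * M₀ = 2 * M₀ / vb * vb := (ENNReal.div_mul_cancel hvb0 hvbtop).symm
      _ ≤ ENNReal.ofReal (Real.exp t₀) * vb := mul_le_mul_left h1 _
  refine ⟨1/2, by norm_num, α/2 + t₀, by positivity, ?_⟩
  intro A hcard hsep Aα K hAα hK hvol
  have hA0 : A.Nonempty := Finset.card_pos.mp (by omega)
  have hAαK : Aα ⊆ K := by rw [hK]; exact subset_gConvexHull Aα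
  have hmemAα : ∀ a ∈ A, a ∈ Aα := by
    intro a ha
    rw [hAα]
    exact ⟨a, ha, by rw [dist_self]; exact hα.le⟩
  -- (1) upper bound for hypVol Aα
  have hAαle : hypVol Aα ≤ (A.card : ℝ≥0∞) * hb := by
    have hAαsub : Aα ⊆ ⋃ a ∈ A, (closedBall a α : Set ℍ') := by
      rw [hAα]
      rintro z ⟨a, haA, hd⟩
      exact Set.mem_biUnion haA hd
    calc hypVol Aα ≤ ∑ a ∈ A, hypVol (closedBall a α) :=
          (measure_mono hAαsub).trans (measure_biUnion_finset_le _ _)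
      _ ≤ ∑ _a ∈ A, hb := Finset.sum_le_sum (fun a _ => hypVol_cball_le a hα.le)
      _ = A.card * hb := by rw [Finset.sum_const, nsmul_eq_mul]
  -- (2) finiteness of hypVol K
  obtain ⟨amin, haminA, hamin⟩ := A.exists_min_image (fun a => a.im) hA0
  obtain ⟨am1, ham1A, ham1⟩ := A.exists_max_image (fun a => a.im) hA0
  obtain ⟨am2, ham2A, ham2⟩ := A.exists_max_image (fun a => ‖(a:ℂ)‖) hA0
  have hexpa : (0:ℝ) ≤ Real.exp α - 1 := by
    have := Real.one_le_exp hα.le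
    linarith
  set m : ℝ := amin.im * Real.exp (-α) with hmdef
  have hm : 0 < m := by positivity
  set L : ℝ := ‖(am2:ℂ)‖ + am1.im * (Real.exp α - 1) + 1 with hLdef
  have hL : 0 < L := by positivity
  have hbounds : ∀ z ∈ Aα, m ≤ z.im ∧ ‖(z:ℂ)‖ ≤ L := by
    intro z hz
    rw [hAα] at hz
    obtain ⟨a, haA, hd⟩ := hz
    have hdaz : dist a z ≤ α := by rwa [dist_comm]
    have hee : Real.exp α * Real.exp (-α) = 1 := by rw [← Real.exp_add]; simp
    constructor
    · have h1 : a.im ≤ z.im * Real.exp (dist a z) := UpperHalfPlane.im_le_im_mul_exp_dist a z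
      have h1' : a.im ≤ z.im * Real.exp α := by
        have := Real.exp_le_exp.mpr hdaz
        nlinarith [z.im_pos]
      have hmin : amin.im ≤ a.im := hamin a haA
      rw [hmdef]
      nlinarith [Real.exp_pos (-α), Real.exp_pos α]
    · have h3 : dist (z:ℂ) (a:ℂ) ≤ a.im * (Real.exp (dist z a) - 1) :=
        UpperHalfPlane.dist_coe_le z a
      have h4 : a.im * (Real.exp (dist z a) - 1) ≤ a.im * (Real.exp α - 1) := by
        have := Real.exp_le_exp.mpr hd
        nlinarith [a.im_pos]
      have h5 : ‖(z:ℂ)‖ ≤ ‖(a:ℂ)‖ + dist (z:ℂ) (a:ℂ) := by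
        rw [Complex.dist_eq]
        have := norm_add_le ((a:ℂ)) ((z:ℂ) - a)
        simpa using this
      have h6 : a.im ≤ am1.im := ham1 a haA
      have h7 : ‖(a:ℂ)‖ ≤ ‖(am2:ℂ)‖ := ham2 a haA
      have h8 : a.im * (Real.exp α - 1) ≤ am1.im * (Real.exp α - 1) := by nlinarith
      rw [hLdef]
      linarith
  set cc : ℝ := m / L^2 with hccdef
  have hcc : 0 < cc := by positivity
  have hsubAα : Aα ⊆ {z : ℍ' | m ≤ z.im} ∩ (⇑invIso '' {z : ℍ' | cc ≤ z.im}) := by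
    intro z hz
    obtain ⟨h1, h2⟩ := hbounds z hz
    refine ⟨h1, ⟨inv0 z, ?_, ?_⟩⟩
    · show cc ≤ (inv0 z).im
      rw [inv0_im, Complex.normSq_eq_norm_sq]
      have habs0 : 0 < ‖(z:ℂ)‖ := norm_pos_iff.mpr z.ne_zero
      have hsq : ‖(z:ℂ)‖^2 ≤ L^2 := by nlinarith
      rw [hccdef]
      exact div_le_div₀ z.im_pos.le h1 (by positivity) hsq
    · rw [invIso_apply]
      exact inv0_invol z
  have hKsub : K ⊆ {z : ℍ' | m ≤ z.im} ∩ (⇑invIso '' {z : ℍ' | cc ≤ z.im}) := by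
    rw [hK]
    exact gConvexHull_subset
      (gconvex_inter (horoball_gconvex m) (gconvex_image invIso (horoball_gconvex cc))) hsubAα
  have hreg : ∀ z ∈ ({z : ℍ' | m ≤ z.im} ∩ (⇑invIso '' {z : ℍ' | cc ≤ z.im})),
      m ≤ z.im ∧ |z.re - 0| ≤ 1/cc ∧ |z.im - 0| ≤ 1/cc := by
    rintro z ⟨h1, w, hw, hwz⟩
    have hz2 : cc ≤ (inv0 z).im := by
      rw [← hwz, invIso_apply, inv0_invol]
      exact hw
    rw [inv0_im, Complex.normSq_eq_norm_sq] at hz2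
    have habs0 : 0 < ‖(z:ℂ)‖ := norm_pos_iff.mpr z.ne_zero
    have him_le : z.im ≤ ‖(z:ℂ)‖ := by
      rw [← UpperHalfPlane.coe_im]
      exact (le_abs_self _).trans (Complex.abs_im_le_norm _)
    have habs_le : ‖(z:ℂ)‖ ≤ 1/cc := by
      have h3 : cc * ‖(z:ℂ)‖^2 ≤ z.im := by
        rw [le_div_iff₀ (by positivity)] at hz2
        linarith
      have h4 : (cc * ‖(z:ℂ)‖) * ‖(z:ℂ)‖ ≤ 1 * ‖(z:ℂ)‖ := by
        nlinarith [him_le]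
      have h5 : cc * ‖(z:ℂ)‖ ≤ 1 := le_of_mul_le_mul_right h4 habs0
      rw [le_div_iff₀ hcc]
      linarith
    have hre_le : |z.re| ≤ 1/cc := by
      rw [← UpperHalfPlane.coe_re]
      exact (Complex.abs_re_le_norm _).trans habs_le
    refine ⟨h1, by simpa using hre_le, ?_⟩
    have : |z.im| ≤ 1/cc := by
      rw [abs_of_pos z.im_pos]
      exact him_le.trans habs_le
    simpa using this
  have hKfin : hypVol K ≠ ∞ := by
    have him : ({z : ℍ' | m ≤ z.im} ∩ (⇑invIso '' {z : ℍ' | cc ≤ z.im}))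
        = HypAux.lift '' (((↑) : ℍ' → ℂ) '' ({z : ℍ' | m ≤ z.im} ∩ (⇑invIso '' {z : ℍ' | cc ≤ z.im}))) := by
      rw [Set.image_image]
      simp only [HypAux.lift_coe, Set.image_id']
    have hle := hypVol_region_le hm (show (0:ℝ) ≤ 1/cc by positivity) ![0, 0]
      (((↑) : ℍ' → ℂ) '' ({z : ℍ' | m ≤ z.im} ∩ (⇑invIso '' {z : ℍ' | cc ≤ z.im}))) ?_ ?_
    · have hbound : ENNReal.ofReal (m⁻¹ ^ 2) * (4 * ENNReal.ofReal ((2 * (1/cc)) ^ 2)) ≠ ⊤ :=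
        ENNReal.mul_ne_top ENNReal.ofReal_ne_top
          (ENNReal.mul_ne_top (by norm_num) ENNReal.ofReal_ne_top)
      refine ne_top_of_le_ne_top hbound ?_
      calc hypVol K ≤ hypVol ({z : ℍ' | m ≤ z.im} ∩ (⇑invIso '' {z : ℍ' | cc ≤ z.im})) :=
            measure_mono hKsub
        _ ≤ ENNReal.ofReal (m⁻¹ ^ 2) * (4 * ENNReal.ofReal ((2 * (1/cc)) ^ 2)) := by
            rw [him]; exact hle
    · rintro w ⟨z, hz, rfl⟩
      rw [UpperHalfPlane.coe_im]
      exact (hreg z hz).1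
    · rintro w ⟨z, hz, rfl⟩
      rw [UpperHalfPlane.coe_im, UpperHalfPlane.coe_re]
      have h := hreg z hz
      exact ⟨by simpa using h.2.1, by simpa using h.2.2⟩
  have hAαfin : hypVol Aα ≠ ∞ := ne_top_of_le_ne_top hKfin (measure_mono hAαK)
  -- (3) ENNReal version of the volume hypothesis
  have hvol' : hypVol K ≤ ENNReal.ofReal C₀ * hypVol Aα := by
    calc hypVol K = ENNReal.ofReal ((hypVol K).toReal) := (ENNReal.ofReal_toReal hKfin).symm
      _ ≤ ENNReal.ofReal (C₀ * (hypVol Aα).toReal) := ENNReal.ofReal_le_ofReal hvol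
      _ = ENNReal.ofReal C₀ * ENNReal.ofReal ((hypVol Aα).toReal) :=
          ENNReal.ofReal_mul hC₀.le
      _ = ENNReal.ofReal C₀ * hypVol Aα := by rw [ENNReal.ofReal_toReal hAαfin]
  -- (4) the deep points
  set Ds := A.filter (fun a => ¬ (Metric.infDist a (frontier K) ≤ α/2 + t₀)) with hDsdef
  have hdeepball : ∀ a ∈ Ds, ball a (α/2 + t₀) ⊆ K := by
    intro a ha
    obtain ⟨haA, hnd⟩ := Finset.mem_filter.mp ha
    have haK : a ∈ K := hAαK (hmemAα a haA)
    refine deep_ball_subset (by positivity) haK ?_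
    intro p hp hpfr
    apply hnd
    calc Metric.infDist a (frontier K) ≤ dist a p := Metric.infDist_le_dist_of_mem hpfr
      _ ≤ α/2 + t₀ := by rw [dist_comm]; exact (mem_ball.mp hp).le
  set E : Set ℂ := ⋃ a ∈ Ds, ball ((a.center (α/2) : ℂ)) (a.im * Real.sinh (α/2)) with hEdef
  have hEmeas : MeasurableSet E := by
    rw [hEdef]
    exact MeasurableSet.biUnion (Ds : Set ℍ').to_countable (fun a _ => measurableSet_ball)
  have hα2 : (0:ℝ) ≤ α/2 := by positivity
  have hElow : (Ds.card : ℝ≥0∞) * vb ≤ nuC E := by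
    have hdisj : (Ds : Set ℍ').PairwiseDisjoint
        (fun a : ℍ' => ball ((a.center (α/2) : ℂ)) (a.im * Real.sinh (α/2))) := by
      intro a ha b hb hab
      rw [Function.onFun, Set.disjoint_left]
      intro w hwa hwb
      have hwa' : w ∈ ((↑) : ℍ' → ℂ) '' ball a (α/2) := by
        rw [UpperHalfPlane.image_coe_ball]; exact hwa
      have hwb' : w ∈ ((↑) : ℍ' → ℂ) '' ball b (α/2) := by
        rw [UpperHalfPlane.image_coe_ball]; exact hwb
      obtain ⟨z1, hz1, hz1e⟩ := hwa'
      obtain ⟨z2, hz2, hz2e⟩ := hwb'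
      have hz12 : z1 = z2 := UpperHalfPlane.ext (hz1e.trans hz2e.symm)
      have haA : a ∈ A := (Finset.mem_filter.mp (by exact_mod_cast ha)).1
      have hbA : b ∈ A := (Finset.mem_filter.mp (by exact_mod_cast hb)).1
      have hsep' := hsep a haA b hbA hab
      have hd1 : dist z1 a < α/2 := mem_ball.mp hz1
      have hd2 : dist z1 b < α/2 := by rw [hz12]; exact mem_ball.mp hz2
      have : dist a b < α := by
        calc dist a b ≤ dist a z1 + dist z1 b := dist_triangle _ _ _
          _ < α/2 + α/2 := by rw [dist_comm a z1]; exact add_lt_add hd1 hd2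
          _ = α := by ring
      linarith
    calc (Ds.card : ℝ≥0∞) * vb = ∑ _a ∈ Ds, vb := by rw [Finset.sum_const, nsmul_eq_mul]
      _ ≤ ∑ a ∈ Ds, nuC (ball ((a.center (α/2) : ℂ)) (a.im * Real.sinh (α/2))) :=
          Finset.sum_le_sum (fun a _ => by
            rw [hvbdef]
            exact nuC_ball_ge a hα2)
      _ = nuC E := (measure_biUnion_finset hdisj (fun a _ => measurableSet_ball)).symm
  set mu : ℝ := Real.exp (-t₀) with hmudef
  have hmu : 0 < mu := Real.exp_pos _
  have hmu1 : mu ≤ 1 := Real.exp_le_one_iff.mpr (by linarith)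
  have hsq : nuC (⇑(Tl mu) '' E) = ENNReal.ofReal (Real.exp t₀) * nuC E := by
    rw [nuC_squeeze hmu hmu1 hEmeas]
    congr 1
    rw [hmudef, Real.exp_neg, inv_inv]
  have hinc : ⇑(Tl mu) '' E ⊆ ((↑) : ℍ' → ℂ) '' K := by
    rintro _ ⟨w, hw, rfl⟩
    rw [hEdef] at hw
    simp only [Set.mem_iUnion, exists_prop] at hw
    obtain ⟨a, haDs, hwball⟩ := hw
    have hwball' : w ∈ ((↑) : ℍ' → ℂ) '' ball a (α/2) := by
      rw [UpperHalfPlane.image_coe_ball]; exact hwball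
    obtain ⟨ω, hω, rfl⟩ := hwball'
    have hTim : 0 < (Tl mu ((ω:ℂ))).im := by
      rw [Tl_im, UpperHalfPlane.coe_im]
      have := ω.im_pos
      positivity
    set z := HypAux.lift (Tl mu ((ω:ℂ))) with hzdef
    have hzcoe : (z:ℂ) = Tl mu ((ω:ℂ)) := HypAux.lift_coe' hTim
    have hzre : z.re = ω.re := by
      have h1 : (z:ℂ).re = ((ω:ℂ)).re := by rw [hzcoe, Tl_re]
      rwa [UpperHalfPlane.coe_re, UpperHalfPlane.coe_re] at h1
    have hzim : z.im = mu * ω.im := by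
      have h1 : (z:ℂ).im = mu * ((ω:ℂ)).im := by rw [hzcoe, Tl_im]
      rwa [UpperHalfPlane.coe_im, UpperHalfPlane.coe_im] at h1
    have hdist : dist z ω = t₀ := by
      rw [UpperHalfPlane.dist_of_re_eq hzre, Real.dist_eq]
      rw [hzim, Real.log_mul hmu.ne' ω.im_pos.ne', hmudef, Real.log_exp]
      rw [show -t₀ + Real.log ω.im - Real.log ω.im = -t₀ from by ring]
      rw [abs_neg, abs_of_pos ht₀pos]
    have hdista : dist z a < α/2 + t₀ := by
      have hωa : dist ω a < α/2 := mem_ball.mp hω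
      calc dist z a ≤ dist z ω + dist ω a := dist_triangle _ _ _
        _ < t₀ + α/2 := by rw [hdist]; linarith
        _ = α/2 + t₀ := by ring
    have hzK : z ∈ K := hdeepball a haDs (mem_ball.mpr hdista)
    exact ⟨z, hzK, hzcoe⟩
  have hchain : ENNReal.ofReal (Real.exp t₀) * ((Ds.card : ℝ≥0∞) * vb)
      ≤ (A.card : ℝ≥0∞) * M₀ := by
    calc ENNReal.ofReal (Real.exp t₀) * ((Ds.card : ℝ≥0∞) * vb)
        ≤ ENNReal.ofReal (Real.exp t₀) * nuC E := mul_le_mul_right hElow _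
      _ = nuC (⇑(Tl mu) '' E) := hsq.symm
      _ ≤ nuC (((↑) : ℍ' → ℂ) '' K) := measure_mono hinc
      _ = nu K := (nu_apply K).symm
      _ ≤ CH * hypVol K := by
          have h := Measure.le_iff'.mp nu_le_smul_hypVol K
          rwa [Measure.smul_apply, smul_eq_mul] at h
      _ ≤ CH * (ENNReal.ofReal C₀ * hypVol Aα) := mul_le_mul_right hvol' _
      _ ≤ CH * (ENNReal.ofReal C₀ * ((A.card : ℝ≥0∞) * hb)) :=
          mul_le_mul_right (mul_le_mul_right hAαle _) _
      _ = (A.card : ℝ≥0∞) * M₀ := by rw [hM₀def]; ring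
  have hDsN : 2 * Ds.card ≤ A.card := by
    by_cases hM0 : M₀ = 0
    · have h0 : ENNReal.ofReal (Real.exp t₀) * ((Ds.card : ℝ≥0∞) * vb) = 0 := by
        apply le_antisymm _ (by positivity)
        calc ENNReal.ofReal (Real.exp t₀) * ((Ds.card : ℝ≥0∞) * vb)
            ≤ (A.card : ℝ≥0∞) * M₀ := hchain
          _ = 0 := by rw [hM0, mul_zero]
      have he0 : ENNReal.ofReal (Real.exp t₀) ≠ 0 := by
        rw [Ne, ENNReal.ofReal_eq_zero, not_le]
        exact Real.exp_pos _
      have hD0 : (Ds.card : ℝ≥0∞) = 0 := by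
        rcases mul_eq_zero.mp h0 with h | h
        · exact absurd h he0
        · rcases mul_eq_zero.mp h with h' | h'
          · exact h'
          · exact absurd h' hvb0
      have : Ds.card = 0 := by exact_mod_cast hD0
      omega
    · have h2 : 2 * M₀ * (Ds.card:ℝ≥0∞) ≤ (A.card:ℝ≥0∞) * M₀ := by
        calc 2 * M₀ * (Ds.card:ℝ≥0∞)
            ≤ ENNReal.ofReal (Real.exp t₀) * vb * (Ds.card:ℝ≥0∞) :=
              mul_le_mul_left hkey _
          _ = ENNReal.ofReal (Real.exp t₀) * ((Ds.card:ℝ≥0∞) * vb) := by ring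
          _ ≤ (A.card:ℝ≥0∞) * M₀ := hchain
      have h3 : ((2 * Ds.card : ℕ) : ℝ≥0∞) * M₀ ≤ (A.card:ℝ≥0∞) * M₀ := by
        calc ((2 * Ds.card : ℕ) : ℝ≥0∞) * M₀ = 2 * M₀ * (Ds.card:ℝ≥0∞) := by
              push_cast; ring
          _ ≤ (A.card:ℝ≥0∞) * M₀ := h2
      have h4 : ((2 * Ds.card : ℕ) : ℝ≥0∞) ≤ (A.card : ℝ≥0∞) :=
        (ENNReal.mul_le_mul_iff_left hM0 hM₀top).mp h3
      exact_mod_cast h4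
  have hsplit : (A.filter (fun a => Metric.infDist a (frontier K) ≤ α/2 + t₀)).card
      + Ds.card = A.card := by
    rw [hDsdef]
    exact Finset.card_filter_add_card_filter_not _
  have hfin : A.card ≤ 2 * (A.filter (fun a => Metric.infDist a (frontier K) ≤ α/2 + t₀)).card := by
    omega
  have hfin' : (A.card : ℝ)
      ≤ 2 * ((A.filter (fun a => Metric.infDist a (frontier K) ≤ α/2 + t₀)).card : ℝ) := by
    exact_mod_cast hfin
  linarith
end

section
/- In a δ-hyperbolic geodesic metric space, every (C, K)-quasi-geodesic segment lies within Hausdorff distance R of the geodesic segment joining its endpoints, where R depends only on δ, C and K (Morse lemma). -/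
section Aux
variable {X : Type} [MetricSpace X]

lemma geo_restrict {f : ℝ → X} {x y : X} (hf : IsGeodesicSegment f x y)
    {sa sb : ℝ} (h0 : 0 ≤ sa) (hab : sa ≤ sb) (hbL : sb ≤ dist x y) :
    IsGeodesicSegment (fun u => f (sa + u)) (f sa) (f sb) := by
  obtain ⟨h1, h2, h3⟩ := hf
  have hmem : ∀ u : ℝ, 0 ≤ u → u ≤ sb - sa → sa + u ∈ Set.Icc (0:ℝ) (dist x y) := by
    intro u hu1 hu2; constructor <;> [linarith; linarith]
  have hd : dist (f sa) (f sb) = sb - sa := by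
    rw [h3 sa ⟨h0, le_trans hab hbL⟩ sb ⟨le_trans h0 hab, hbL⟩, abs_of_nonpos (by linarith)]
    ring
  refine ⟨by simp, ?_, ?_⟩
  · rw [hd]; norm_num
  · rw [hd]
    intro s hs t ht
    have := h3 (sa + s) (hmem s hs.1 hs.2) (sa + t) (hmem t ht.1 ht.2)
    simpa using this

lemma pow_quad (N : ℕ) : (N : ℝ) ^ 2 ≤ 4 * 2 ^ N := by
  have H : ∀ N : ℕ, (N : ℝ) ^ 2 ≤ 4 * 2 ^ N ∧ (N : ℝ) ≤ 2 ^ N := by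
    intro N
    induction N with
    | zero => norm_num
    | succ n ih =>
      have h1 : (1:ℝ) ≤ 2 ^ n := one_le_pow₀ (by norm_num)
      obtain ⟨ih1, ih2⟩ := ih
      have h2 : (2:ℝ) ^ (n+1) = 2 * 2 ^ n := by ring
      constructor
      · push_cast; rw [h2]; nlinarith
      · push_cast; rw [h2]; nlinarith
  exact (H N).1

lemma chain_lemma
    (geo : ∀ x y : X, ∃ f : ℝ → X, IsGeodesicSegment f x y)
    {δ : ℝ} (hδ : 0 ≤ δ)
    (thin : ∀ (x y z : X) (f g h : ℝ → X),
      IsGeodesicSegment f x y → IsGeodesicSegment g y z → IsGeodesicSegment h z x →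
      ∀ s ∈ Set.Icc (0 : ℝ) (dist x y),
        ∃ w ∈ g '' Set.Icc (0 : ℝ) (dist y z) ∪ h '' Set.Icc (0 : ℝ) (dist z x),
          dist (f s) w ≤ δ) :
    ∀ (N m : ℕ), m ≤ 2 ^ N → ∀ p : ℕ → X, (∀ k, k < m → dist (p k) (p (k+1)) ≤ 1) →
      ∀ f : ℝ → X, IsGeodesicSegment f (p 0) (p m) →
      ∀ s ∈ Set.Icc (0:ℝ) (dist (p 0) (p m)),
      ∃ k, k ≤ m ∧ dist (f s) (p k) ≤ δ * N + 1/2 := by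
  intro N
  induction N with
  | zero =>
    intro m hm p hp f hf s hs
    interval_cases m
    · refine ⟨0, le_refl _, ?_⟩
      have h0 : dist (p 0) (p 0) = 0 := dist_self _
      have hs0 : s = 0 := le_antisymm (h0 ▸ hs.2) hs.1
      rw [hs0, hf.1]
      simp only [dist_self, Nat.cast_zero, mul_zero, zero_add]
      norm_num
    · have hd : dist (p 0) (p 1) ≤ 1 := hp 0 (by norm_num)
      rcases le_or_gt s (1/2) with h | h
      · refine ⟨0, by norm_num, ?_⟩
        rw [← hf.1, hf.2.2 s hs 0 ⟨le_refl _, dist_nonneg⟩,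
          abs_of_nonneg (by linarith [hs.1] : (0:ℝ) ≤ s - 0)]
        simp only [Nat.cast_zero, mul_zero, zero_add]
        linarith
      · refine ⟨1, le_refl _, ?_⟩
        rw [← hf.2.1, hf.2.2 s hs (dist (p 0) (p 1)) ⟨dist_nonneg, le_refl _⟩,
          abs_of_nonpos (by linarith [hs.2] : s - dist (p 0) (p 1) ≤ 0)]
        simp only [Nat.cast_zero, mul_zero, zero_add]
        have := hs.2
        linarith
  | succ N ih =>
    intro m hm p hp f hf s hs
    rcases le_or_gt m (2 ^ N) with hm' | hm'
    · obtain ⟨k, hk, hdk⟩ := ih m hm' p hp f hf s hs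
      refine ⟨k, hk, le_trans hdk ?_⟩
      push_cast
      nlinarith
    · -- split at h := 2^N
      set h : ℕ := 2 ^ N with hh
      have hhm : h < m := hm'
      have hmh : m - h ≤ 2 ^ N := by
        have : m ≤ 2 * 2 ^ N := by rw [← pow_succ']; exact hm
        omega
      obtain ⟨g, hg⟩ := geo (p m) (p h)
      obtain ⟨g', hg'⟩ := geo (p h) (p 0)
      obtain ⟨w, hw, hdw⟩ := thin (p 0) (p m) (p h) f g g' hf hg hg' s hs
      rcases hw with ⟨t, ht, rfl⟩ | ⟨t, ht, rfl⟩
      · -- w = g t on geodesic from p m to p h; reversed chain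
        set q : ℕ → X := fun k => p (m - k) with hq
        have hq0 : q 0 = p m := by simp [hq]
        have hqe : q (m - h) = p h := by simp [hq]; congr 1; omega
        have hgq : IsGeodesicSegment g (q 0) (q (m - h)) := by rw [hq0, hqe]; exact hg
        have hsteps : ∀ k, k < m - h → dist (q k) (q (k+1)) ≤ 1 := by
          intro k hk
          have h1 : m - k = (m - (k+1)) + 1 := by omega
          have := hp (m - (k+1)) (by omega)
          rw [dist_comm] at this
          simpa [hq, h1] using this
        obtain ⟨k, hk, hdk⟩ := ih (m - h) hmh q hsteps g hgq t (by rwa [hq0, hqe])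
        refine ⟨m - k, by omega, ?_⟩
        calc dist (f s) (p (m - k)) ≤ dist (f s) (g t) + dist (g t) (q k) := dist_triangle _ _ _
          _ ≤ δ + (δ * N + 1/2) := add_le_add hdw hdk
          _ = δ * (N + 1) + 1/2 := by ring
          _ = δ * ((N:ℕ)+1 : ℕ) + 1/2 := by push_cast; ring
      · -- w = g' t on geodesic from p h to p 0
        set q : ℕ → X := fun k => p (h - k) with hq
        have hq0 : q 0 = p h := by simp [hq]
        have hqe : q h = p 0 := by simp [hq]
        have hgq : IsGeodesicSegment g' (q 0) (q h) := by rw [hq0, hqe]; exact hg'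
        have hsteps : ∀ k, k < h → dist (q k) (q (k+1)) ≤ 1 := by
          intro k hk
          have h1 : h - k = (h - (k+1)) + 1 := by omega
          have := hp (h - (k+1)) (by omega)
          rw [dist_comm] at this
          simpa [hq, h1] using this
        obtain ⟨k, hk, hdk⟩ := ih h (le_refl _) q hsteps g' hgq t (by rwa [hq0, hqe])
        refine ⟨h - k, by omega, ?_⟩
        calc dist (f s) (p (h - k)) ≤ dist (f s) (g' t) + dist (g' t) (q k) := dist_triangle _ _ _
          _ ≤ δ + (δ * N + 1/2) := add_le_add hdw hdk
          _ = δ * ((N:ℕ)+1 : ℕ) + 1/2 := by push_cast; ring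

lemma min_step (x d : ℝ) (hd : 0 ≤ d) : |min x d - min (x+1) d| ≤ 1 := by
  rcases le_total (x+1) d with h|h
  · rw [min_eq_left (by linarith), min_eq_left h, abs_of_nonpos (by linarith)]
    linarith
  · rw [min_eq_right h]
    rcases le_total x d with h2|h2
    · rw [min_eq_left h2, abs_of_nonpos (by linarith)]
      linarith
    · rw [min_eq_right h2]
      simp

lemma num_t {C K D t dij : ℝ} (hC : 1 ≤ C) (h1 : t ≤ C*dij + K) (h2 : dij ≤ 6*D)
    (hD : 1 < D) : t ≤ 6*C*D + K := by nlinarith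

lemma num_M {C K D r1 r2 t M : ℝ} (hC : 1 ≤ C) (hK : 0 ≤ K) (hD : 1 < D)
    (hM : M = r1 + t + r2) (h1 : r1 ≤ D + 1) (h2 : r2 ≤ D + 1) (h3 : t ≤ 6*C*D + K) :
    M ≤ (6*C+K+4) * D := by nlinarith

lemma num_double {x y : ℝ} (h : x < y) : 2*x < 2*y := by linarith

lemma num_final {A δ' D N P : ℝ} (hA : 1 ≤ A) (hδ' : 1 ≤ δ') (hN : 1 ≤ N)
    (hq : N^2 ≤ 4*P) (hP : P < 2*(A*D)) (hDN : D ≤ δ'*N + 1/2)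
    (hD : 16*A*δ'^2 + 2*δ' + 2 < D) : False := by
  have hApos : (0:ℝ) < A := by linarith
  have hNsq : N^2 < 8*A*D := by nlinarith
  have hND : N^2 < 8*A*δ'*N + 4*A := by
    nlinarith [mul_le_mul_of_nonneg_left hDN (show (0:ℝ) ≤ 8*A by linarith)]
  have hNb : N < 8*A*δ' + 4*A := by
    by_contra hc
    push_neg at hc
    have hN0 : (0:ℝ) < N := by linarith
    have h1 : (8*A*δ' + 4*A)*N ≤ N^2 := by nlinarith [mul_le_mul_of_nonneg_right hc hN0.le]
    have h2 : 4*A ≤ 4*A*N := by nlinarith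
    nlinarith [hND, h1, h2]
  nlinarith [mul_lt_mul_of_pos_left hNb (show (0:ℝ) < δ' by linarith),
    mul_le_mul_of_nonneg_left hδ' (show (0:ℝ) ≤ 4*A*δ' by nlinarith),
    mul_nonneg hApos.le (sq_nonneg δ')]

lemma num_low {C K D0 x y v : ℝ} (hC : 1 ≤ C) (h1 : x ≤ y) (h2 : y ≤ C*v + K)
    (h3 : v ≤ 2*D0) (hD0 : 0 ≤ D0) : x + D0 ≤ (2*C+1)*D0 + K := by nlinarith

end Aux

section Core
variable {X : Type} [MetricSpace X]

set_option maxHeartbeats 2000000 in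
lemma morse_core {δ' C K : ℝ} (hδ' : 1 ≤ δ') (hC : 1 ≤ C) (hK : 0 ≤ K)
    (geo : ∀ x y : X, ∃ f : ℝ → X, IsGeodesicSegment f x y)
    (thin : ∀ (x y z : X) (f g h : ℝ → X),
      IsGeodesicSegment f x y → IsGeodesicSegment g y z → IsGeodesicSegment h z x →
      ∀ s ∈ Set.Icc (0 : ℝ) (dist x y),
        ∃ w ∈ g '' Set.Icc (0 : ℝ) (dist y z) ∪ h '' Set.Icc (0 : ℝ) (dist z x),
          dist (f s) w ≤ δ')
    (n : ℕ) (γ : Fin (n+1) → X)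
    (hstep : ∀ i : Fin n, dist (γ i.castSucc) (γ i.succ) ≤ 1)
    (hquasi : ∀ i j : Fin (n+1), i ≤ j → ((j : ℕ) : ℝ) - (i : ℕ) ≤ C * dist (γ i) (γ j) + K)
    (f : ℝ → X) (hf : IsGeodesicSegment f (γ 0) (γ (Fin.last n))) :
    ∀ s ∈ Set.Icc (0:ℝ) (dist (γ 0) (γ (Fin.last n))),
      Metric.infDist (f s) (Set.range γ) ≤ 16*(6*C+K+4)*δ'^2 + 2*δ' + 2 := by
  set A : ℝ := 6*C+K+4 with hA
  have hA1 : 1 ≤ A := by simp only [hA]; linarith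
  set D0 : ℝ := 16*A*δ'^2 + 2*δ' + 2 with hD0
  set L : ℝ := dist (γ 0) (γ (Fin.last n)) with hL
  have hL0 : 0 ≤ L := dist_nonneg
  set Γ : Set X := Set.range γ with hΓ
  have hΓne : Γ.Nonempty := ⟨γ 0, Set.mem_range_self _⟩
  have hΓc : IsCompact Γ := (Set.finite_range γ).isCompact
  set F : ℝ → X := fun s => f (max 0 (min s L)) with hF
  have hclampmem : ∀ s : ℝ, max 0 (min s L) ∈ Set.Icc (0:ℝ) L := fun s =>
    ⟨le_max_left _ _, max_le hL0 (min_le_right _ _)⟩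
  have hFs : ∀ s ∈ Set.Icc (0:ℝ) L, F s = f s := by
    intro s hs
    simp only [hF]
    rw [min_eq_left hs.2, max_eq_right hs.1]
  have hFlip : ∀ s t : ℝ, dist (F s) (F t) ≤ dist s t := by
    intro s t
    have h1 : dist (F s) (F t) = |max 0 (min s L) - max 0 (min t L)| :=
      hf.2.2 _ (hclampmem s) _ (hclampmem t)
    rw [h1, Real.dist_eq]
    calc |max 0 (min s L) - max 0 (min t L)|
        = |max (min s L) 0 - max (min t L) 0| := by rw [max_comm, max_comm (min t L)]
      _ ≤ |min s L - min t L| := abs_max_sub_max_le_abs _ _ _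
      _ ≤ max |s - t| |L - L| := abs_min_sub_min_le_max _ _ _ _
      _ = |s - t| := by simp
  have hFcont : Continuous F :=
    (LipschitzWith.of_dist_le_mul (K := 1) (by simpa using hFlip)).continuous
  set φ : ℝ → ℝ := fun s => Metric.infDist (F s) Γ with hφ
  have hφcont : Continuous φ := (Metric.continuous_infDist_pt Γ).comp hFcont
  obtain ⟨sm, hsm, hmax⟩ := isCompact_Icc.exists_isMaxOn (Set.nonempty_Icc.2 hL0)
    hφcont.continuousOn
  set D : ℝ := φ sm with hD
  have hφle : ∀ s ∈ Set.Icc (0:ℝ) L, φ s ≤ D := fun s hs => hmax hs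
  -- reduce to D ≤ D0
  suffices hDD0 : D ≤ D0 by
    intro s hs
    have := hφle s hs
    rw [hφ] at this
    simp only at this
    rw [hFs s hs] at this
    linarith
  by_contra hcon
  push_neg at hcon
  have hD1 : 1 < D := by nlinarith
  set p : X := f sm with hp
  have hpF : F sm = p := hFs sm hsm
  have hDp : D = Metric.infDist p Γ := by rw [← hpF]
  have hDdist : ∀ m : Fin (n+1), D ≤ dist p (γ m) := by
    intro m
    rw [hDp]
    exact Metric.infDist_le_dist_of_mem ⟨m, rfl⟩
  set sa : ℝ := max 0 (sm - 2*D) with hsa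
  set sb : ℝ := min L (sm + 2*D) with hsb
  have hD0' : 0 < D := by linarith
  have hsa0 : 0 ≤ sa := le_max_left _ _
  have hsasm : sa ≤ sm := max_le hsm.1 (by linarith)
  have hsmsb : sm ≤ sb := le_min hsm.2 (by linarith)
  have hsbL : sb ≤ L := min_le_left _ _
  have hsaL : sa ≤ L := le_trans hsasm hsm.2
  have hsb0 : 0 ≤ sb := le_trans hsa0 (le_trans hsasm hsmsb)
  set a : X := f sa with ha
  set b : X := f sb with hb
  have hdpa : dist p a = sm - sa := by
    rw [hp, ha, hf.2.2 sm hsm sa ⟨hsa0, hsaL⟩, abs_of_nonneg (by linarith)]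
  have hdpb : dist p b = sb - sm := by
    rw [hp, hb, hf.2.2 sm hsm sb ⟨hsb0, hsbL⟩, abs_of_nonpos (by linarith)]
    ring
  have hdpa2 : dist p a ≤ 2*D := by rw [hdpa]; have := le_max_right 0 (sm - 2*D); simp only [hsa]; linarith [le_max_right (0:ℝ) (sm - 2*D)]
  have hdpb2 : dist p b ≤ 2*D := by rw [hdpb]; linarith [min_le_right L (sm + 2*D)]
  have hainf : Metric.infDist a Γ ≤ D := by
    have h1 := hφle sa ⟨hsa0, hsaL⟩
    rw [hφ] at h1
    simp only at h1
    rwa [hFs sa ⟨hsa0, hsaL⟩] at h1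
  have hbinf : Metric.infDist b Γ ≤ D := by
    have h1 := hφle sb ⟨hsb0, hsbL⟩
    rw [hφ] at h1
    simp only at h1
    rwa [hFs sb ⟨hsb0, hsbL⟩] at h1
  obtain ⟨za, hzaΓ, hza⟩ := hΓc.exists_infDist_eq_dist hΓne a
  obtain ⟨zb, hzbΓ, hzb⟩ := hΓc.exists_infDist_eq_dist hΓne b
  obtain ⟨i, rfl⟩ := hzaΓ
  obtain ⟨j, rfl⟩ := hzbΓ
  have hd1D : dist a (γ i) ≤ D := by rw [← hza]; exact hainf
  have hd2D : dist (γ j) b ≤ D := by rw [dist_comm, ← hzb]; exact hbinf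
  -- case analysis for endpoints
  have hacase : a = γ 0 ∨ dist p a = 2*D := by
    rcases le_or_gt (sm - 2*D) 0 with h | h
    · left; rw [ha]
      have : sa = 0 := by rw [hsa]; exact max_eq_left h
      rw [this, hf.1]
    · right
      have : sa = sm - 2*D := by rw [hsa]; exact max_eq_right h.le
      rw [hdpa, this]; ring
  have hbcase : b = γ (Fin.last n) ∨ dist p b = 2*D := by
    rcases le_or_gt L (sm + 2*D) with h | h
    · left; rw [hb]
      have : sb = L := by rw [hsb]; exact min_eq_left h
      rw [this, hL, hf.2.1]
    · right
      have : sb = sm + 2*D := by rw [hsb]; exact min_eq_right h.le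
      rw [hdpb, this]; ring
  -- discrete path extended to ℕ
  set γ' : ℕ → X := fun m => γ ⟨min m n, Nat.lt_succ_of_le (min_le_right m n)⟩ with hγ'
  have hγ'eq : ∀ (m : ℕ) (hm : m ≤ n), γ' m = γ ⟨m, Nat.lt_succ_of_le hm⟩ := by
    intro m hm
    simp only [hγ']
    congr 1
    exact Fin.ext (by simp [Nat.min_eq_left hm])
  have hγ'mem : ∀ m, γ' m ∈ Γ := fun m => ⟨_, rfl⟩
  have hγ'step : ∀ m : ℕ, dist (γ' m) (γ' (m+1)) ≤ 1 := by
    intro m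
    rcases lt_or_ge m n with h | h
    · have e1 : γ' m = γ ((⟨m, h⟩ : Fin n).castSucc) := by
        rw [hγ'eq m h.le]; exact congrArg γ (Fin.ext (by simp))
      have e2 : γ' (m+1) = γ ((⟨m, h⟩ : Fin n).succ) := by
        rw [hγ'eq (m+1) h]; exact congrArg γ (Fin.ext (by simp))
      rw [e1, e2]; exact hstep _
    · have heq : γ' m = γ' (m+1) := by
        simp only [hγ']
        congr 1
        exact Fin.ext (by simp [Nat.min_eq_right h, Nat.min_eq_right (le_trans h (Nat.le_succ m))])
      rw [heq, dist_self]; norm_num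
  have hγ'quasi : ∀ u v : ℕ, u ≤ v → v ≤ n → (v:ℝ) - u ≤ C * dist (γ' u) (γ' v) + K := by
    intro u v huv hvn
    have h := hquasi ⟨u, Nat.lt_succ_of_le (le_trans huv hvn)⟩ ⟨v, Nat.lt_succ_of_le hvn⟩
      (by simpa [Fin.mk_le_mk] using huv)
    rw [hγ'eq u (le_trans huv hvn), hγ'eq v hvn]
    exact h
  set i' : ℕ := (i : ℕ) with hi'
  set j' : ℕ := (j : ℕ) with hj'
  have hin : i' ≤ n := Nat.lt_succ_iff.1 i.isLt
  have hjn : j' ≤ n := Nat.lt_succ_iff.1 j.isLt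
  have hγ'i : γ' i' = γ i := by rw [hγ'eq i' hin]
  have hγ'j : γ' j' = γ j := by rw [hγ'eq j' hjn]
  set t : ℕ := if i' ≤ j' then j' - i' else i' - j' with ht
  set mid : ℕ → X := fun k => if i' ≤ j' then γ' (i' + k) else γ' (i' - k) with hmid
  have hmid0 : mid 0 = γ i := by
    simp only [hmid]; split <;> simpa using hγ'i
  have hmidt : mid t = γ j := by
    simp only [hmid, ht]
    split
    · next h => rw [show i' + (j' - i') = j' from by omega]; exact hγ'j
    · next h => rw [show i' - (i' - j') = j' from by omega]; exact hγ'j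
  have hmidstep : ∀ k, k < t → dist (mid k) (mid (k+1)) ≤ 1 := by
    intro k hk
    simp only [hmid]
    split
    · next h => rw [show i' + (k+1) = (i'+k)+1 from rfl]; exact hγ'step _
    · next h =>
        have h1 : i' - k = (i' - (k+1)) + 1 := by
          simp only [ht, if_neg h] at hk; omega
        rw [h1, dist_comm]
        exact hγ'step _
  have hmidΓ : ∀ k, mid k ∈ Γ := by intro k; simp only [hmid]; split <;> exact hγ'mem _
  have hij0 : t = 0 → γ i = γ j := by
    intro h0
    have hij : i' = j' := by simp only [ht] at h0; split at h0 <;> omega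
    have : i = j := Fin.ext hij
    rw [this]
  have htr : (t:ℝ) ≤ C * dist (γ i) (γ j) + K := by
    rcases le_or_gt i' j' with h | h
    · have h2 := hγ'quasi i' j' h hjn
      rw [hγ'i, hγ'j] at h2
      simp only [ht, if_pos h]
      push_cast [Nat.cast_sub h]
      linarith
    · have h2 := hγ'quasi j' i' h.le hin
      rw [hγ'i, hγ'j] at h2
      rw [dist_comm (γ j) (γ i)] at h2
      simp only [ht, if_neg (not_le.2 h)]
      push_cast [Nat.cast_sub h.le]
      linarith
  -- geodesic pieces and the concatenated chain
  obtain ⟨e1, he1⟩ := geo a (γ i)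
  obtain ⟨e2, he2⟩ := geo (γ j) b
  set d1 : ℝ := dist a (γ i) with hd1
  set d2 : ℝ := dist (γ j) b with hd2
  have hd10 : (0:ℝ) ≤ d1 := dist_nonneg
  have hd20 : (0:ℝ) ≤ d2 := dist_nonneg
  set r1 : ℕ := ⌈d1⌉₊ with hr1
  set r2 : ℕ := ⌈d2⌉₊ with hr2
  have hd1r1 : d1 ≤ r1 := Nat.le_ceil d1
  have hd2r2 : d2 ≤ r2 := Nat.le_ceil d2
  set M : ℕ := r1 + t + r2 with hM
  set q : ℕ → X := fun k =>
    if k ≤ r1 then e1 (min (k:ℝ) d1)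
    else if k ≤ r1 + t then mid (k - r1)
    else e2 (min (((k - (r1 + t) : ℕ)):ℝ) d2) with hq
  have he1mem : ∀ x : ℝ, 0 ≤ x → min x d1 ∈ Set.Icc (0:ℝ) d1 :=
    fun x hx => ⟨le_min hx hd10, min_le_right _ _⟩
  have he2mem : ∀ x : ℝ, 0 ≤ x → min x d2 ∈ Set.Icc (0:ℝ) d2 :=
    fun x hx => ⟨le_min hx hd20, min_le_right _ _⟩
  have he1d : ∀ x : ℝ, 0 ≤ x → dist a (e1 (min x d1)) = min x d1 := by
    intro x hx
    conv_lhs => rw [← he1.1]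
    rw [he1.2.2 0 ⟨le_refl 0, hd10⟩ _ (he1mem x hx), zero_sub, abs_neg,
      abs_of_nonneg (he1mem x hx).1]
  have he2d : ∀ x : ℝ, 0 ≤ x → dist (e2 (min x d2)) b = d2 - min x d2 := by
    intro x hx
    conv_lhs => rw [← he2.2.1]
    rw [he2.2.2 _ (he2mem x hx) d2 ⟨hd20, le_refl _⟩,
      abs_of_nonpos (by linarith [min_le_right x d2])]
    ring
  have hq0 : q 0 = a := by
    simp only [hq, if_pos (Nat.zero_le r1)]
    rw [show min ((0:ℕ):ℝ) d1 = 0 from by simp [min_eq_left hd10], he1.1]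
  have hqe1 : ∀ k, k ≤ r1 → q k = e1 (min (k:ℝ) d1) := by
    intro k hk; simp only [hq, if_pos hk]
  have hqmid : ∀ k, r1 ≤ k → k ≤ r1 + t → q k = mid (k - r1) := by
    intro k h1 h2
    by_cases hk : k ≤ r1
    · have hkr : k = r1 := le_antisymm hk h1
      subst hkr
      simp only [hq, if_pos (le_refl r1)]
      rw [min_eq_right hd1r1, he1.2.1, Nat.sub_self, hmid0]
    · push_neg at hk
      simp only [hq, if_neg (by omega : ¬ k ≤ r1), if_pos h2]
  have hqe2 : ∀ k, r1 + t ≤ k → q k = e2 (min (((k - (r1+t) : ℕ)):ℝ) d2) := by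
    intro k h1
    by_cases hk : k ≤ r1 + t
    · have hkk : k = r1 + t := le_antisymm hk h1
      subst hkk
      rw [Nat.sub_self, show min (((0:ℕ)):ℝ) d2 = 0 from by simp [min_eq_left hd20], he2.1]
      by_cases ht0 : t = 0
      · rw [hqe1 (r1+t) (by omega),
          min_eq_right (by push_cast; linarith [hd1r1, Nat.cast_nonneg (α := ℝ) t]),
          he1.2.1, hij0 ht0]
      · rw [hqmid _ (by omega) (le_refl _), show r1 + t - r1 = t from by omega]
        exact hmidt
    · push_neg at hk
      simp only [hq, if_neg (by omega : ¬ k ≤ r1), if_neg (by omega : ¬ k ≤ r1 + t)]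
  have hqM : q M = b := by
    rw [hqe2 M (by omega), show M - (r1+t) = r2 from by omega, min_eq_right hd2r2, he2.2.1]
  have hqstep : ∀ k, k < M → dist (q k) (q (k+1)) ≤ 1 := by
    intro k hk
    rcases lt_or_ge k r1 with h1 | h1
    · rw [hqe1 k (by omega), hqe1 (k+1) (by omega),
        he1.2.2 _ (he1mem _ (Nat.cast_nonneg k)) _ (he1mem _ (Nat.cast_nonneg (k+1)))]
      push_cast
      exact min_step _ _ hd10
    · rcases lt_or_ge k (r1 + t) with h2 | h2
      · rw [hqmid k h1 (by omega), hqmid (k+1) (by omega) (by omega),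
          show (k+1) - r1 = (k - r1) + 1 from by omega]
        exact hmidstep _ (by omega)
      · rw [hqe2 k h2, hqe2 (k+1) (by omega),
          he2.2.2 _ (he2mem _ (Nat.cast_nonneg _)) _ (he2mem _ (Nat.cast_nonneg _)),
          show (k+1) - (r1+t) = (k - (r1+t)) + 1 from by omega]
        push_cast
        exact min_step _ _ hd20
  have hqdist : ∀ k, k ≤ M → D ≤ dist p (q k) := by
    intro k hk
    rcases le_or_gt k r1 with h1 | h1
    · rw [hqe1 k h1]
      rcases hacase with haeq | ha2
      · have hd1z : d1 = 0 := by
          have hz : Metric.infDist a Γ = 0 := by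
            rw [haeq]; exact Metric.infDist_zero_of_mem ⟨0, rfl⟩
          rw [← hza]; exact hz
        rw [show min ((k:ℕ):ℝ) d1 = 0 from by
          rw [hd1z]; exact min_eq_right (Nat.cast_nonneg k), he1.1, haeq]
        exact hDdist 0
      · have h3 := dist_triangle p (e1 (min (k:ℝ) d1)) a
        rw [dist_comm (e1 (min (k:ℝ) d1)) a, he1d _ (Nat.cast_nonneg k)] at h3
        have h4 : min ((k:ℕ):ℝ) d1 ≤ D := le_trans (min_le_right _ _) hd1D
        linarith [ha2]
    · rcases le_or_gt k (r1 + t) with h2 | h2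
      · rw [hqmid k h1.le h2]
        obtain ⟨m, hm⟩ := hmidΓ (k - r1)
        rw [← hm]
        exact hDdist m
      · rw [hqe2 k h2.le]
        rcases hbcase with hbeq | hb2
        · have hd2z : d2 = 0 := by
            have hz : Metric.infDist b Γ = 0 := by
              rw [hbeq]; exact Metric.infDist_zero_of_mem ⟨Fin.last n, rfl⟩
            change dist (γ j) b = 0
            rw [dist_comm, ← hzb]; exact hz
          rw [show min (((k - (r1+t) : ℕ)):ℝ) d2 = 0 from by
            rw [hd2z]; exact min_eq_right (Nat.cast_nonneg _), he2.1]
          exact hDdist j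
        · have h3 := dist_triangle p (e2 (min (((k - (r1+t) : ℕ)):ℝ) d2)) b
          rw [he2d _ (Nat.cast_nonneg _)] at h3
          have h4 : d2 ≤ D := hd2D
          have h5 : (0:ℝ) ≤ min (((k - (r1+t) : ℕ)):ℝ) d2 :=
            le_min (Nat.cast_nonneg _) hd20
          linarith [hb2]
  -- bound on M
  have hr1' : (r1:ℝ) ≤ d1 + 1 := le_of_lt (Nat.ceil_lt_add_one hd10)
  have hr2' : (r2:ℝ) ≤ d2 + 1 := le_of_lt (Nat.ceil_lt_add_one hd20)
  have hdij : dist (γ i) (γ j) ≤ 6*D := by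
    have t1 := dist_triangle (γ i) p (γ j)
    have t2 := dist_triangle (γ i) a p
    have t3 := dist_triangle p b (γ j)
    rw [dist_comm (γ i) a] at t2
    rw [dist_comm b (γ j)] at t3
    rw [dist_comm a p] at t2
    linarith [hd1D, hd2D, hdpa2, hdpb2]
  have hMr : (M:ℝ) ≤ A * D := by
    have hMc : (M:ℝ) = (r1:ℝ) + t + r2 := by rw [hM]; push_cast; ring
    have htr' : (t:ℝ) ≤ 6*C*D + K := num_t hC htr hdij hD1
    have hr1D : (r1:ℝ) ≤ D + 1 := le_trans hr1' (add_le_add_left hd1D 1)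
    have hr2D : (r2:ℝ) ≤ D + 1 := le_trans hr2' (add_le_add_left hd2D 1)
    rw [hA]
    exact num_M hC hK hD1 hMc hr1D hr2D htr'
  -- apply the chain lemma
  set g : ℝ → X := fun u => f (sa + u) with hg
  have hgseg : IsGeodesicSegment g a b := geo_restrict hf hsa0 (le_trans hsasm hsmsb) hsbL
  have hdab : dist a b = sb - sa := by
    rw [ha, hb, hf.2.2 sa ⟨hsa0, hsaL⟩ sb ⟨hsb0, hsbL⟩, abs_of_nonpos (by linarith)]
    ring
  have hgp : g (sm - sa) = p := by
    rw [hg]; simp only; rw [hp]; congr 1; ring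
  have hgseg' : IsGeodesicSegment g (q 0) (q M) := by rw [hq0, hqM]; exact hgseg
  have hmemq : sm - sa ∈ Set.Icc (0:ℝ) (dist (q 0) (q M)) := by
    rw [hq0, hqM, hdab]
    exact ⟨by linarith, by linarith⟩
  set N : ℕ := Nat.clog 2 M with hN
  have hMN : M ≤ 2 ^ N := Nat.le_pow_clog one_lt_two M
  obtain ⟨k, hkM, hdk⟩ := chain_lemma geo (by linarith : (0:ℝ) ≤ δ') thin N M hMN q hqstep
    g hgseg' (sm - sa) hmemq
  rw [hgp] at hdk
  have hDN : D ≤ δ' * N + 1/2 := le_trans (hqdist k hkM) hdk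
  -- numeric contradiction
  rcases le_or_gt M 1 with hM1 | hM1
  · have hN0 : N = 0 := by
      rw [hN]
      interval_cases M <;> simp [Nat.clog]
    rw [hN0] at hDN
    push_cast at hDN
    linarith
  · have hN1 : 1 ≤ N := by rw [hN]; exact Nat.clog_pos one_lt_two hM1
    have hlt : 2 ^ (N - 1) < M := Nat.pow_pred_clog_lt_self one_lt_two hM1
    have hltR : (2:ℝ) ^ N < 2 * (A * D) := by
      have hc1 : ((2:ℕ) ^ (N-1) : ℝ) < (M:ℝ) := by exact_mod_cast hlt
      have hc2 : (2:ℝ) ^ N = 2 * 2 ^ (N-1) := by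
        conv_lhs => rw [show N = (N-1)+1 from by omega]
        rw [pow_succ]; ring
      push_cast at hc1
      rw [hc2]
      exact num_double (lt_of_lt_of_le hc1 hMr)
    have hq2 := pow_quad N
    have hN1' : (1:ℝ) ≤ (N:ℝ) := by exact_mod_cast hN1
    rw [hD0] at hcon
    exact num_final hA1 hδ' hN1' hq2 hltR hDN hcon

end Core

section Lower
variable {X : Type} [MetricSpace X]

set_option maxHeartbeats 2000000 in
lemma morse_lower {δ' C K : ℝ} (hδ' : 1 ≤ δ') (hC : 1 ≤ C) (hK : 0 ≤ K)
    (geo : ∀ x y : X, ∃ f : ℝ → X, IsGeodesicSegment f x y)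
    (thin : ∀ (x y z : X) (f g h : ℝ → X),
      IsGeodesicSegment f x y → IsGeodesicSegment g y z → IsGeodesicSegment h z x →
      ∀ s ∈ Set.Icc (0 : ℝ) (dist x y),
        ∃ w ∈ g '' Set.Icc (0 : ℝ) (dist y z) ∪ h '' Set.Icc (0 : ℝ) (dist z x),
          dist (f s) w ≤ δ')
    (n : ℕ) (γ : Fin (n+1) → X)
    (hstep : ∀ i : Fin n, dist (γ i.castSucc) (γ i.succ) ≤ 1)
    (hquasi : ∀ i j : Fin (n+1), i ≤ j → ((j : ℕ) : ℝ) - (i : ℕ) ≤ C * dist (γ i) (γ j) + K)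
    (f : ℝ → X) (hf : IsGeodesicSegment f (γ 0) (γ (Fin.last n))) :
    ∀ m0 : Fin (n+1), ∃ s ∈ Set.Icc (0:ℝ) (dist (γ 0) (γ (Fin.last n))),
      dist (γ m0) (f s) ≤ (2*C+1) * (16*(6*C+K+4)*δ'^2 + 2*δ' + 2) + K := by
  classical
  set D0 : ℝ := 16*(6*C+K+4)*δ'^2 + 2*δ' + 2 with hD0
  have hD00 : 0 ≤ D0 := by nlinarith [sq_nonneg δ']
  have hD0R : D0 ≤ (2*C+1) * D0 + K := by nlinarith
  set L : ℝ := dist (γ 0) (γ (Fin.last n)) with hL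
  have hL0 : 0 ≤ L := dist_nonneg
  have hcore := morse_core hδ' hC hK geo thin n γ hstep hquasi f hf
  set F : ℝ → X := fun s => f (max 0 (min s L)) with hF
  have hclampmem : ∀ s : ℝ, max 0 (min s L) ∈ Set.Icc (0:ℝ) L := fun s =>
    ⟨le_max_left _ _, max_le hL0 (min_le_right _ _)⟩
  have hFs : ∀ s ∈ Set.Icc (0:ℝ) L, F s = f s := by
    intro s hs
    simp only [hF]
    rw [min_eq_left hs.2, max_eq_right hs.1]
  have hFlip : ∀ s t : ℝ, dist (F s) (F t) ≤ dist s t := by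
    intro s t
    have h1 : dist (F s) (F t) = |max 0 (min s L) - max 0 (min t L)| :=
      hf.2.2 _ (hclampmem s) _ (hclampmem t)
    rw [h1, Real.dist_eq]
    calc |max 0 (min s L) - max 0 (min t L)|
        = |max (min s L) 0 - max (min t L) 0| := by rw [max_comm, max_comm (min t L)]
      _ ≤ |min s L - min t L| := abs_max_sub_max_le_abs _ _ _
      _ ≤ max |s - t| |L - L| := abs_min_sub_min_le_max _ _ _ _
      _ = |s - t| := by simp
  have hFcont : Continuous F :=
    (LipschitzWith.of_dist_le_mul (K := 1) (by simpa using hFlip)).continuous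
  set γ' : ℕ → X := fun m => γ ⟨min m n, Nat.lt_succ_of_le (min_le_right m n)⟩ with hγ'
  have hγ'eq : ∀ (m : ℕ) (hm : m ≤ n), γ' m = γ ⟨m, Nat.lt_succ_of_le hm⟩ := by
    intro m hm
    simp only [hγ']
    congr 1
    exact Fin.ext (by simp [Nat.min_eq_left hm])
  have hγ'0 : γ' 0 = γ 0 := by
    rw [hγ'eq 0 (Nat.zero_le n)]; exact congrArg γ (Fin.ext (by simp))
  have hγ'n : γ' n = γ (Fin.last n) := by
    rw [hγ'eq n (le_refl n)]; exact congrArg γ (Fin.ext (by simp [Fin.last]))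
  have hγ'step : ∀ m : ℕ, dist (γ' m) (γ' (m+1)) ≤ 1 := by
    intro m
    rcases lt_or_ge m n with h | h
    · have e1 : γ' m = γ ((⟨m, h⟩ : Fin n).castSucc) := by
        rw [hγ'eq m h.le]; exact congrArg γ (Fin.ext (by simp))
      have e2 : γ' (m+1) = γ ((⟨m, h⟩ : Fin n).succ) := by
        rw [hγ'eq (m+1) h]; exact congrArg γ (Fin.ext (by simp))
      rw [e1, e2]; exact hstep _
    · have heq : γ' m = γ' (m+1) := by
        simp only [hγ']
        congr 1
        exact Fin.ext (by simp [Nat.min_eq_right h, Nat.min_eq_right (le_trans h (Nat.le_succ m))])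
      rw [heq, dist_self]; norm_num
  have hγ'quasi : ∀ u v : ℕ, u ≤ v → v ≤ n → (v:ℝ) - u ≤ C * dist (γ' u) (γ' v) + K := by
    intro u v huv hvn
    have h := hquasi ⟨u, Nat.lt_succ_of_le (le_trans huv hvn)⟩ ⟨v, Nat.lt_succ_of_le hvn⟩
      (by simpa [Fin.mk_le_mk] using huv)
    rw [hγ'eq u (le_trans huv hvn), hγ'eq v hvn]
    exact h
  have hγ'dist : ∀ u l : ℕ, dist (γ' u) (γ' (u + l)) ≤ (l:ℝ) := by
    intro u l
    induction l with
    | zero => simp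
    | succ l ih =>
      have h1 := dist_triangle (γ' u) (γ' (u+l)) (γ' (u+l+1))
      have h2 := hγ'step (u+l)
      rw [show u+(l+1) = (u+l)+1 from rfl]
      push_cast
      linarith
  intro m0
  set P : ℕ → Prop := fun m => ∃ s ∈ Set.Icc (0:ℝ) L, dist (γ' m) (f s) ≤ D0 with hP
  have hP0 : P 0 := ⟨0, ⟨le_refl 0, hL0⟩, by rw [hγ'0, hf.1, dist_self]; exact hD00⟩
  have hPn : P n := ⟨L, ⟨hL0, le_refl L⟩, by rw [hγ'n, hf.2.1, dist_self]; exact hD00⟩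
  set k : ℕ := (m0 : ℕ) with hk
  have hkn : k ≤ n := Nat.lt_succ_iff.1 m0.isLt
  have hγ'k : γ' k = γ m0 := by
    rw [hγ'eq k hkn]
  by_cases hPk : P k
  · obtain ⟨s, hs, hds⟩ := hPk
    refine ⟨s, hs, ?_⟩
    rw [← hγ'k]
    exact le_trans hds hD0R
  · set i : ℕ := Nat.findGreatest P k with hi
    have hPi : P i := Nat.findGreatest_spec (Nat.zero_le k) hP0
    have hik : i ≤ k := Nat.findGreatest_le k
    have himax : ∀ m, i < m → m ≤ k → ¬ P m := fun m h1 h2 =>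
      Nat.findGreatest_is_greatest h1 h2
    have hexj : ∃ d : ℕ, P (k + d) ∧ k + d ≤ n :=
      ⟨n - k, by rw [show k + (n-k) = n from by omega]; exact ⟨hPn, le_refl n⟩⟩
    set d : ℕ := Nat.find hexj with hd
    obtain ⟨hPj0, hjn0⟩ := Nat.find_spec hexj
    set j : ℕ := k + d with hj
    have hPj : P j := hPj0
    have hjn : j ≤ n := hjn0
    have hjmin : ∀ m, k ≤ m → m < j → ¬ P m := by
      intro m h1 h2 hPm
      exact Nat.find_min hexj (m := m - k) (by omega)
        ⟨by rw [show k + (m-k) = m from by omega]; exact hPm, by omega⟩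
    have hikk : i < k := lt_of_le_of_ne hik (by intro h; rw [h] at hPi; exact hPk hPi)
    have hd0 : d ≠ 0 := by
      intro h
      apply hPk
      have h2 := hPj0
      rw [show j = k from by omega] at h2
      exact h2
    have hkj : k < j := by omega
    set SA : Set ℝ := ⋃ m ∈ Finset.range (i+1), {s : ℝ | dist (F s) (γ' m) ≤ D0} with hSA
    set SB : Set ℝ := ⋃ m ∈ Finset.Icc j n, {s : ℝ | dist (F s) (γ' m) ≤ D0} with hSB
    have hclosed : ∀ m : ℕ, IsClosed {s : ℝ | dist (F s) (γ' m) ≤ D0} := fun m =>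
      isClosed_le (hFcont.dist continuous_const) continuous_const
    have hSAc : IsClosed SA := isClosed_biUnion_finset (fun m _ => hclosed m)
    have hSBc : IsClosed SB := isClosed_biUnion_finset (fun m _ => hclosed m)
    have hcover : Set.Icc (0:ℝ) L ⊆ SA ∪ SB := by
      intro s hs
      have h1 := hcore s hs
      obtain ⟨z, hz, hzd⟩ := ((Set.finite_range γ).isCompact).exists_infDist_eq_dist
        ⟨γ 0, Set.mem_range_self _⟩ (f s)
      obtain ⟨m1, rfl⟩ := hz
      have hdm1 : dist (f s) (γ m1) ≤ D0 := by rw [← hzd]; exact h1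
      set m : ℕ := (m1 : ℕ) with hm
      have hmn : m ≤ n := Nat.lt_succ_iff.1 m1.isLt
      have hγ'm : γ' m = γ m1 := by
        rw [hγ'eq m hmn]
      have hmem : dist (F s) (γ' m) ≤ D0 := by
        rw [hFs s hs, hγ'm]
        exact hdm1
      have hsplit : m ≤ i ∨ j ≤ m := by
        by_contra hcontra
        push_neg at hcontra
        obtain ⟨h2, h3⟩ := hcontra
        rcases le_or_gt m k with h4 | h4
        · exact himax m h2 h4 ⟨s, hs, by rw [hγ'm]; rw [dist_comm]; exact hdm1⟩
        · exact hjmin m h4.le h3 ⟨s, hs, by rw [hγ'm]; rw [dist_comm]; exact hdm1⟩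
      rcases hsplit with h4 | h4
      · exact Or.inl (Set.mem_biUnion (Finset.mem_range.2 (Nat.lt_succ_of_le h4)) hmem)
      · exact Or.inr (Set.mem_biUnion (Finset.mem_Icc.2 ⟨h4, hmn⟩) hmem)
    have hA0 : (Set.Icc (0:ℝ) L ∩ SA).Nonempty := by
      obtain ⟨s, hs, hds⟩ := hPi
      exact ⟨s, hs, Set.mem_biUnion (Finset.mem_range.2 (Nat.lt_succ_of_le (le_refl i)))
        (by show dist (F s) (γ' i) ≤ D0; rw [hFs s hs, dist_comm]; exact hds)⟩
    have hB0 : (Set.Icc (0:ℝ) L ∩ SB).Nonempty := by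
      obtain ⟨s, hs, hds⟩ := hPj
      exact ⟨s, hs, Set.mem_biUnion (Finset.mem_Icc.2 ⟨le_refl j, hjn⟩)
        (by show dist (F s) (γ' j) ≤ D0; rw [hFs s hs, dist_comm]; exact hds)⟩
    obtain ⟨s, hsIcc, hsA, hsB⟩ := (isPreconnected_closed_iff.1 isPreconnected_Icc)
      SA SB hSAc hSBc hcover hA0 hB0
    obtain ⟨m1, hm1, hm1d⟩ := Set.mem_iUnion₂.1 hsA
    obtain ⟨m2, hm2, hm2d⟩ := Set.mem_iUnion₂.1 hsB
    have hm1i : m1 ≤ i := Nat.lt_succ_iff.1 (Finset.mem_range.1 hm1)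
    obtain ⟨hm2j, hm2n⟩ := Finset.mem_Icc.1 hm2
    have hm1d' : dist (F s) (γ' m1) ≤ D0 := hm1d
    have hm2d' : dist (F s) (γ' m2) ≤ D0 := hm2d
    have hq12 := hγ'quasi m1 m2 (by omega) hm2n
    have hd12 : dist (γ' m1) (γ' m2) ≤ 2*D0 := by
      have h1 := dist_triangle (γ' m1) (F s) (γ' m2)
      have h2 : dist (γ' m1) (F s) = dist (F s) (γ' m1) := dist_comm _ _
      linarith
    have hdk1 : dist (γ' k) (γ' m1) ≤ (k:ℝ) - m1 := by
      have h1 := hγ'dist m1 (k - m1)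
      rw [show m1 + (k - m1) = k from by omega] at h1
      rw [Nat.cast_sub (show m1 ≤ k from by omega)] at h1
      rw [dist_comm]
      exact h1
    have hkm2 : (k:ℝ) ≤ (m2:ℝ) := by exact_mod_cast (show k ≤ m2 from by omega)
    refine ⟨s, hsIcc, ?_⟩
    rw [← hγ'k]
    have htri := dist_triangle (γ' k) (γ' m1) (f s)
    have hm1fs : dist (γ' m1) (f s) ≤ D0 := by
      rw [dist_comm, ← hFs s hsIcc]
      exact hm1d'
    have hfin : ((k:ℝ) - (m1:ℝ)) + D0 ≤ (2*C+1)*D0 + K :=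
      num_low hC (by linarith) hq12 hd12 hD00
    linarith

end Lower

/-- Morse lemma: in a geodesic space with δ-thin triangles, every
(C, K)-quasi-geodesic segment (a discrete path with unit-bounded steps satisfying
`j - i ≤ C·dist(γ i, γ j) + K`) is within Hausdorff distance `R = R(δ, C, K)` of the
geodesic segment joining its endpoints. -/
theorem stmt_9 (δ C K : ℝ) (hδ : 0 ≤ δ) (hC : 1 ≤ C) (hK : 0 ≤ K) :
    ∃ R : ℝ,
      ∀ {X : Type} [MetricSpace X],
        (∀ x y : X, ∃ f : ℝ → X, IsGeodesicSegment f x y) →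
        (∀ (x y z : X) (f g h : ℝ → X),
          IsGeodesicSegment f x y → IsGeodesicSegment g y z → IsGeodesicSegment h z x →
          ∀ s ∈ Set.Icc (0 : ℝ) (dist x y),
            ∃ w ∈ g '' Set.Icc (0 : ℝ) (dist y z) ∪ h '' Set.Icc (0 : ℝ) (dist z x),
              dist (f s) w ≤ δ) →
        ∀ (n : ℕ) (γ : Fin (n + 1) → X),
          (∀ i : Fin n, dist (γ i.castSucc) (γ i.succ) ≤ 1) →
          (∀ i j : Fin (n + 1), i ≤ j →
            ((j : ℕ) : ℝ) - (i : ℕ) ≤ C * dist (γ i) (γ j) + K) →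
          ∀ f : ℝ → X, IsGeodesicSegment f (γ 0) (γ (Fin.last n)) →
            Metric.hausdorffDist (Set.range γ)
              (f '' Set.Icc (0 : ℝ) (dist (γ 0) (γ (Fin.last n)))) ≤ R := by
  set δ' : ℝ := max δ 1 with hδ'def
  have hδ'1 : 1 ≤ δ' := le_max_right _ _
  set D0 : ℝ := 16*(6*C+K+4)*δ'^2 + 2*δ' + 2 with hD0
  have hD00 : 0 ≤ D0 := by nlinarith [sq_nonneg δ']
  set R : ℝ := (2*C+1) * D0 + K with hR
  have hR0 : 0 ≤ R := by nlinarith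
  have hD0R : D0 ≤ R := by nlinarith
  refine ⟨R, ?_⟩
  intro X _ geo thin n γ hstep hquasi f hf
  have thin' : ∀ (x y z : X) (f g h : ℝ → X),
      IsGeodesicSegment f x y → IsGeodesicSegment g y z → IsGeodesicSegment h z x →
      ∀ s ∈ Set.Icc (0 : ℝ) (dist x y),
        ∃ w ∈ g '' Set.Icc (0 : ℝ) (dist y z) ∪ h '' Set.Icc (0 : ℝ) (dist z x),
          dist (f s) w ≤ δ' := by
    intro x y z f' g' h' h1 h2 h3 s hs
    obtain ⟨w, hw, hdw⟩ := thin x y z f' g' h' h1 h2 h3 s hs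
    exact ⟨w, hw, le_trans hdw (le_max_left _ _)⟩
  apply Metric.hausdorffDist_le_of_mem_dist hR0
  · rintro x ⟨m, rfl⟩
    obtain ⟨s, hs, hds⟩ := morse_lower hδ'1 hC hK geo thin' n γ hstep hquasi f hf m
    exact ⟨f s, Set.mem_image_of_mem f hs, hds⟩
  · rintro y ⟨s, hs, rfl⟩
    have h1 := morse_core hδ'1 hC hK geo thin' n γ hstep hquasi f hf s hs
    obtain ⟨z, hz, hzd⟩ := ((Set.finite_range γ).isCompact).exists_infDist_eq_dist
      ⟨γ 0, Set.mem_range_self _⟩ (f s)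
    refine ⟨z, hz, ?_⟩
    rw [← hzd]
    exact le_trans h1 hD0R
end

section
/- Let γ : Fin (n+1) → V be an injective path in a graph of maximum degree at most d, and fix r ≥ 0 and c > 0. Suppose at least c·n of the points γ i lie within graph distance r of some geodesic segment from γ 0 to γ n. Then dist(γ 0, γ n) ≥ c·n / (d+1)^r − 1. -/
open Finset

lemma ball_card {V : Type*} [Fintype V] [DecidableEq V]
    (G : SimpleGraph V) [DecidableRel G.Adj]
    (d : ℕ) (hdeg : ∀ v : V, G.degree v ≤ d) (u : V) (r : ℕ) :
    (univ.filter (fun v => G.Reachable u v ∧ G.dist u v ≤ r)).card ≤ (d + 1) ^ r := by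
  induction r with
  | zero =>
    have : (univ.filter (fun v => G.Reachable u v ∧ G.dist u v ≤ 0)) ⊆ {u} := by
      intro v hv
      simp only [mem_filter, mem_univ, true_and, Nat.le_zero] at hv
      simp [ (hv.1.dist_eq_zero_iff.mp hv.2).symm ]
    calc _ ≤ ({u} : Finset V).card := card_le_card this
      _ = 1 := rfl
      _ ≤ (d+1)^0 := by simp
  | succ r ih =>
    set B := univ.filter (fun v => G.Reachable u v ∧ G.dist u v ≤ r) with hB
    have hsub : (univ.filter (fun v => G.Reachable u v ∧ G.dist u v ≤ r + 1)) ⊆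
        B.biUnion (fun w => insert w (G.neighborFinset w)) := by
      intro v hv
      simp only [mem_filter, mem_univ, true_and] at hv
      obtain ⟨hre, hdist⟩ := hv
      rcases Nat.lt_or_ge (G.dist u v) (r+1) with h | h
      · exact mem_biUnion.mpr ⟨v, by simp [hB, hre, Nat.lt_succ_iff.mp h], by simp⟩
      · have hd : G.dist u v = r + 1 := le_antisymm hdist h
        obtain ⟨pw, hpw⟩ := hre.exists_walk_length_eq_dist
        have hne : v ≠ u := by
          rintro rfl; simp [SimpleGraph.dist_self] at hd
        obtain ⟨w, hadj, q, hq⟩ := SimpleGraph.Walk.exists_eq_cons_of_ne hne pw.reverse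
        have hqlen : q.length = r := by
          have := congrArg SimpleGraph.Walk.length hq
          simp [hpw, hd] at this
          omega
        have hwre : G.Reachable u w := (SimpleGraph.Walk.reachable q.reverse)
        have hwd : G.dist u w ≤ r := by
          have := SimpleGraph.dist_le q.reverse
          simpa [hqlen] using this
        refine mem_biUnion.mpr ⟨w, by simp [hB, hwre, hwd], ?_⟩
        simp [SimpleGraph.mem_neighborFinset, hadj.symm]
    calc _ ≤ (B.biUnion (fun w => insert w (G.neighborFinset w))).card := card_le_card hsub
      _ ≤ ∑ w ∈ B, (insert w (G.neighborFinset w)).card := card_biUnion_le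
      _ ≤ ∑ w ∈ B, (d + 1) := by
          refine sum_le_sum fun w _ => ?_
          calc (insert w (G.neighborFinset w)).card ≤ (G.neighborFinset w).card + 1 :=
                card_insert_le _ _
            _ ≤ d + 1 := by
                have := hdeg w
                rw [← SimpleGraph.card_neighborFinset_eq_degree] at this
                omega
      _ = B.card * (d + 1) := by rw [sum_const, smul_eq_mul]
      _ ≤ (d+1)^r * (d+1) := Nat.mul_le_mul_right _ ih
      _ = (d+1)^(r+1) := by ring

/-- if a self-avoiding walk `γ` in a graph of maximum degree at most `d` has
at least `c·n` of its points within distance `r` of a geodesic segment from `γ 0` to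
`γ n`, then `dist (γ 0) (γ n) ≥ c·n/(d+1)^r − 1`. -/
theorem stmt_15 {V : Type*} [Fintype V] [DecidableEq V]
    (G : SimpleGraph V) [DecidableRel G.Adj]
    (d : ℕ) (hdeg : ∀ v : V, G.degree v ≤ d)
    {n : ℕ} (γ : Fin (n + 1) → V) (hinj : Function.Injective γ)
    (hwalk : ∀ i : Fin n, G.Adj (γ i.castSucc) (γ i.succ))
    (r : ℕ) (c : ℝ) (hc : 0 < c)
    (L : ℕ) (hL : L = G.dist (γ 0) (γ (Fin.last n))) (p : Fin (L + 1) → V)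
    (hgeo : ∀ i j : Fin (L + 1), (G.dist (p i) (p j) : ℤ) = |(i : ℤ) - (j : ℤ)|)
    (hp₀ : p 0 = γ 0) (hpL : p (Fin.last L) = γ (Fin.last n))
    (hnear : c * n ≤
      ((univ.filter (fun i : Fin (n + 1) =>
        ∃ j : Fin (L + 1), G.dist (γ i) (p j) ≤ r)).card : ℝ)) :
    (G.dist (γ 0) (γ (Fin.last n)) : ℝ) ≥ c * n / (d + 1) ^ r - 1 := by
  -- reachability of γ i from γ 0
  have hreγ : ∀ i : Fin (n + 1), G.Reachable (γ 0) (γ i) := by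
    intro i
    induction i using Fin.induction with
    | zero => exact SimpleGraph.Reachable.refl _
    | succ i ih => exact ih.trans (hwalk i).reachable
  -- reachability of p j from γ 0
  have hrep : ∀ j : Fin (L + 1), G.Reachable (γ 0) (p j) := by
    intro j
    by_cases hj : (j : ℕ) = 0
    · have : j = 0 := Fin.ext hj
      rw [this, hp₀]
    · have h0 := hgeo 0 j
      have : (G.dist (p 0) (p j) : ℤ) = (j : ℕ) := by
        simpa using h0
      have hd : G.dist (p 0) (p j) ≠ 0 := by
        intro h; rw [h] at this; exact hj (by exact_mod_cast this.symm)
      rw [← hp₀]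
      exact SimpleGraph.Reachable.of_dist_ne_zero hd
  set F := univ.filter (fun i : Fin (n + 1) =>
        ∃ j : Fin (L + 1), G.dist (γ i) (p j) ≤ r) with hF
  -- cardinality bound
  have hcard : F.card ≤ (L + 1) * (d + 1) ^ r := by
    have himg : F.image γ ⊆ (univ : Finset (Fin (L + 1))).biUnion
        (fun j => univ.filter (fun v => G.Reachable (p j) v ∧ G.dist (p j) v ≤ r)) := by
      intro v hv
      obtain ⟨i, hi, rfl⟩ := mem_image.mp hv
      simp only [hF, mem_filter, mem_univ, true_and] at hi
      obtain ⟨j, hj⟩ := hi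
      refine mem_biUnion.mpr ⟨j, mem_univ _, ?_⟩
      simp only [mem_filter, mem_univ, true_and]
      exact ⟨(hrep j).symm.trans (hreγ i), by rwa [SimpleGraph.dist_comm]⟩
    calc F.card = (F.image γ).card := (card_image_of_injective _ hinj).symm
      _ ≤ _ := card_le_card himg
      _ ≤ ∑ _j : Fin (L + 1), (d + 1) ^ r :=
          card_biUnion_le.trans (sum_le_sum fun j _ => ball_card G d hdeg (p j) r)
      _ = (L + 1) * (d + 1) ^ r := by simp [mul_comm]
  have hpow : (0 : ℝ) < ((d : ℝ) + 1) ^ r := by positivity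
  have hreal : c * n ≤ ((L : ℝ) + 1) * ((d : ℝ) + 1) ^ r := by
    calc c * n ≤ (F.card : ℝ) := hnear
      _ ≤ (((L + 1) * (d + 1) ^ r : ℕ) : ℝ) := by exact_mod_cast hcard
      _ = ((L : ℝ) + 1) * ((d : ℝ) + 1) ^ r := by push_cast; ring
  have : c * n / ((d : ℝ) + 1) ^ r ≤ (L : ℝ) + 1 := by
    rw [div_le_iff₀ hpow]; linarith
  rw [← hL]
  linarith
end
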